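/- arXiv:1307.3654 — 8 statements merged into one kernel-verified Lean document; each statement's English description precedes it below -/
import Mathlib

section
/- Let P be a statistical model on a measurable space (X, A) and I a set. For each i in I, let C_i be a sub-σ-algebra of A and let (P_{i,η} : η ∈ H_i) be a family of submodels of P whose union is P, such that C_i is both complete and sufficient for each P_{i,η}. Then the σ-algebra ⋁_{i∈I} C_i generated by the union of the C_i is complete for P, i.e., every ⋁_{i∈I} C_i-measurable real function h that is integrable with every P ∈ P and satisfies ∫ h dP = 0 for all P ∈ P vanishes P-almost surely for every P ∈ P. -/
open MeasureTheory

/-- A sub-σ-algebra `C` of `mX` is (Lehmann–Scheffé) complete for the model `M`: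
every `C`-measurable real function, integrable with respect to every member of `M`
and with expectation `0` under every member, vanishes `P`-a.s. for every `P ∈ M`. -/
def IsLSComplete {X : Type*} (mX : MeasurableSpace X) (C : MeasurableSpace X)
    (M : Set (@Measure X mX)) : Prop :=
  ∀ h : X → ℝ, Measurable[C] h → (∀ P ∈ M, Integrable h P) →
    (∀ P ∈ M, ∫ x, h x ∂P = 0) → ∀ P ∈ M, h =ᵐ[P] 0

/-- A sub-σ-algebra `C` of `mX` is sufficient for the model `M`: for every
`mX`-measurable set `A` there is a single `C`-measurable version of the conditional
probability of `A` given `C`, valid simultaneously for all `P ∈ M`. -/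
def IsLSSufficient {X : Type*} (mX : MeasurableSpace X) (C : MeasurableSpace X)
    (M : Set (@Measure X mX)) : Prop :=
  ∀ A : Set X, MeasurableSet[mX] A →
    ∃ g : X → ℝ, Measurable[C] g ∧
      ∀ P ∈ M, ∀ s : Set X, MeasurableSet[C] s →
        ∫ x in s, g x ∂P = (P (s ∩ A)).toReal

namespace LSJC

open Set Filter

variable {X : Type*} {c : MeasurableSpace X} {mX : MeasurableSpace X}

lemma ae_nonneg_of_setIntegral_nonneg_subalg
    (hc : c ≤ mX) {P : @Measure X mX} {d : X → ℝ}
    (hd : Measurable[c] d) (hdi : Integrable d P)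
    (h0 : ∀ σ : Set X, MeasurableSet[c] σ → 0 ≤ ∫ x in σ, d x ∂P) :
    0 ≤ᵐ[P] d := by
  have hsm : StronglyMeasurable[c] d := hd.stronglyMeasurable
  have h1 : 0 ≤ᵐ[P.trim hc] d := by
    refine ae_nonneg_of_forall_setIntegral_nonneg (hdi.trim hc hsm) fun s hs _ => ?_
    rw [← setIntegral_trim hc hsm hs]
    exact h0 s hs
  exact ae_le_of_ae_le_trim h1

lemma ae_eq_zero_of_setIntegral_zero_subalg
    (hc : c ≤ mX) {P : @Measure X mX} {d : X → ℝ}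
    (hd : Measurable[c] d) (hdi : Integrable d P)
    (h0 : ∀ σ : Set X, MeasurableSet[c] σ → ∫ x in σ, d x ∂P = 0) :
    d =ᵐ[P] 0 := by
  have h1 : 0 ≤ᵐ[P] d :=
    ae_nonneg_of_setIntegral_nonneg_subalg hc hd hdi fun σ hσ => (h0 σ hσ).ge
  have h2 : 0 ≤ᵐ[P] fun x => -d x := by
    refine ae_nonneg_of_setIntegral_nonneg_subalg hc hd.neg hdi.neg fun σ hσ => ?_
    rw [integral_neg, h0 σ hσ, neg_zero]
  filter_upwards [h1, h2] with x hx1 hx2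
  simp only [Pi.zero_apply] at hx1 hx2 ⊢
  linarith


/-- There is a common `c`-measurable version of the conditional expectation of `f`
given `c`, valid for all members of `M'`, in the sense of set-integral identities. -/
def CommonCE (mX c : MeasurableSpace X) (M' : Set (@Measure X mX)) (f : X → ℝ) : Prop :=
  ∃ g : X → ℝ, Measurable[c] g ∧ ∀ P ∈ M', Integrable g P ∧
    ∀ σ : Set X, MeasurableSet[c] σ → ∫ x in σ, g x ∂P = ∫ x in σ, f x ∂P

lemma commonCE_indicator (hc : c ≤ mX) {M' : Set (@Measure X mX)}
    (hprob : ∀ P ∈ M', IsProbabilityMeasure P)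
    (hsuff : IsLSSufficient mX c M') {A : Set X} (hA : MeasurableSet[mX] A) :
    CommonCE mX c M' (A.indicator fun _ => (1 : ℝ)) := by
  obtain ⟨g, hgm, hgeq⟩ := hsuff A hA
  have hgm' : Measurable[mX] g := hgm.mono hc le_rfl
  set g' : X → ℝ := fun x => max (-1) (min (g x) 2) with hg'def
  have hg'm : Measurable[c] g' := Measurable.max measurable_const (hgm.min measurable_const)
  have hg'bd : ∀ x, ‖g' x‖ ≤ 2 := by
    intro x
    rw [Real.norm_eq_abs, abs_le]
    constructor
    · have : (-1 : ℝ) ≤ g' x := le_max_left _ _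
      linarith
    · exact max_le (by norm_num) (min_le_right _ _)
  refine ⟨g', hg'm, fun P hP => ?_⟩
  haveI := hprob P hP
  have hg'int : Integrable g' P := by
    refine Integrable.mono' (integrable_const (2 : ℝ))
      ((hg'm.mono hc le_rfl).aestronglyMeasurable) (ae_of_all _ hg'bd)
  -- `g` is a.e. in `(-1, 2)`
  have hnull1 : P {x | 2 ≤ g x} = 0 := by
    have hsub : {x | 2 ≤ g x} ⊆ ⋃ n : ℕ, g ⁻¹' (Icc 2 (2 + n)) := by
      intro x hx
      refine mem_iUnion.mpr ⟨⌈g x⌉₊, ?_⟩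
      simp only [mem_preimage, mem_Icc]
      exact ⟨hx, le_trans (Nat.le_ceil _) (by linarith [Nat.cast_nonneg (α := ℝ) ⌈g x⌉₊])⟩
    refine measure_mono_null hsub (measure_iUnion_null fun n => ?_)
    set s : Set X := g ⁻¹' (Icc 2 (2 + n)) with hsdef
    have hsc : MeasurableSet[c] s := hgm measurableSet_Icc
    have hsm : MeasurableSet[mX] s := hc _ hsc
    have hmem : ∀ x ∈ s, (2 : ℝ) ≤ g x ∧ g x ≤ 2 + n := by
      intro x hx; rw [hsdef] at hx; simpa [mem_Icc] using hx
    have hbd : ∀ x ∈ s, g x ≤ 2 + n := fun x hx => (hmem x hx).2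
    have hlb : ∀ x ∈ s, (2 : ℝ) ≤ g x := fun x hx => (hmem x hx).1
    have hint : IntegrableOn g s P := by
      refine Integrable.mono' (integrable_const (2 + n : ℝ))
        (hgm'.aestronglyMeasurable.restrict) ?_
      refine (ae_restrict_iff' hsm).mpr (ae_of_all _ fun x hx => ?_)
      rw [Real.norm_eq_abs, abs_le]
      exact ⟨by linarith [hlb x hx], hbd x hx⟩
    have h1 : (2 : ℝ) * (P s).toReal ≤ ∫ x in s, g x ∂P := by
      have := setIntegral_mono_on (integrableOn_const (measure_lt_top P s).ne)
        hint hsm hlb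
      rwa [setIntegral_const, smul_eq_mul, mul_comm, measureReal_def] at this
    have h2 : ∫ x in s, g x ∂P ≤ (P s).toReal := by
      rw [hgeq P hP s hsc]
      exact ENNReal.toReal_mono (measure_ne_top P s) (measure_mono inter_subset_left)
    have h3 : (P s).toReal ≤ 0 := by linarith
    have h4 : (P s).toReal = 0 := le_antisymm h3 ENNReal.toReal_nonneg
    exact (ENNReal.toReal_eq_zero_iff _).mp h4 |>.resolve_right (measure_ne_top P s)
  have hnull2 : P {x | g x ≤ -1} = 0 := by
    have hsub : {x | g x ≤ -1} ⊆ ⋃ n : ℕ, g ⁻¹' (Icc (-(n : ℝ)) (-1)) := by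
      intro x hx
      refine mem_iUnion.mpr ⟨⌈-g x⌉₊, ?_⟩
      simp only [mem_preimage, mem_Icc]
      refine ⟨by linarith [Nat.le_ceil (-g x)], hx⟩
    refine measure_mono_null hsub (measure_iUnion_null fun n => ?_)
    set s : Set X := g ⁻¹' (Icc (-(n : ℝ)) (-1)) with hsdef
    have hsc : MeasurableSet[c] s := hgm measurableSet_Icc
    have hsm : MeasurableSet[mX] s := hc _ hsc
    have hint : IntegrableOn g s P := by
      refine Integrable.mono' (integrable_const (n : ℝ))
        (hgm'.aestronglyMeasurable.restrict) ?_
      refine (ae_restrict_iff' hsm).mpr (ae_of_all _ fun x hx => ?_)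
      rw [hsdef] at hx
      simp only [mem_preimage, mem_Icc] at hx
      rw [Real.norm_eq_abs, abs_le]
      exact ⟨hx.1, by linarith [hx.2, Nat.cast_nonneg (α := ℝ) n]⟩
    have h1 : ∫ x in s, g x ∂P ≤ (-1 : ℝ) * (P s).toReal := by
      have := setIntegral_mono_on hint
        (integrableOn_const (C := (-1 : ℝ)) (measure_lt_top P s).ne) hsm
        (fun x hx => by rw [hsdef] at hx; simpa [mem_Icc] using hx.2)
      rwa [setIntegral_const, smul_eq_mul, mul_comm, measureReal_def] at this
    have h2 : (0 : ℝ) ≤ ∫ x in s, g x ∂P := by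
      rw [hgeq P hP s hsc]; exact ENNReal.toReal_nonneg
    have h4 : (P s).toReal = 0 := by nlinarith [ENNReal.toReal_nonneg (a := P s)]
    exact (ENNReal.toReal_eq_zero_iff _).mp h4 |>.resolve_right (measure_ne_top P s)
  have haeq : g =ᵐ[P] g' := by
    have : ∀ᵐ x ∂P, ¬ 2 ≤ g x := (ae_iff).mpr (by simpa using hnull1)
    have h2 : ∀ᵐ x ∂P, ¬ g x ≤ -1 := (ae_iff).mpr (by simpa using hnull2)
    filter_upwards [this, h2] with x hx1 hx2
    push_neg at hx1 hx2
    simp only [hg'def]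
    rw [min_eq_left (le_of_lt hx1), max_eq_right (by linarith)]
  refine ⟨hg'int, fun σ hσ => ?_⟩
  have hσm : MeasurableSet[mX] σ := hc _ hσ
  have e1 : ∫ x in σ, g' x ∂P = ∫ x in σ, g x ∂P :=
    setIntegral_congr_ae hσm (haeq.symm.mono fun x hx _ => hx)
  rw [e1, hgeq P hP σ hσ, setIntegral_indicator hA, setIntegral_const, smul_eq_mul, mul_one, measureReal_def]

lemma commonCE_simple (hc : c ≤ mX) {M' : Set (@Measure X mX)}
    (hprob : ∀ P ∈ M', IsProbabilityMeasure P)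
    (hsuff : IsLSSufficient mX c M') (f : @SimpleFunc X mX ℝ) :
    CommonCE mX c M' f := by
  induction f using SimpleFunc.induction with
  | @const a s hs =>
    obtain ⟨g, hgm, hg⟩ := commonCE_indicator hc hprob hsuff hs
    refine ⟨fun x => a * g x, hgm.const_mul a, fun P hP => ?_⟩
    obtain ⟨hgi, hge⟩ := hg P hP
    refine ⟨hgi.const_mul a, fun σ hσ => ?_⟩
    have h1 : ∫ x in σ, a * g x ∂P = a * ∫ x in σ, g x ∂P := integral_const_mul a g
    have h2 : ∀ x, (SimpleFunc.piecewise s hs (SimpleFunc.const X a)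
        (SimpleFunc.const X 0)) x = a * (s.indicator (fun _ => (1:ℝ)) x) := by
      intro x
      by_cases hx : x ∈ s <;>
        simp [SimpleFunc.piecewise_apply, Set.indicator_apply, hx]
    simp only [h2]
    rw [h1, hge σ hσ, integral_const_mul]
  | @add f₁ f₂ _ hcf₁ hcf₂ =>
    obtain ⟨g₁, hg₁m, hg₁⟩ := hcf₁
    obtain ⟨g₂, hg₂m, hg₂⟩ := hcf₂
    refine ⟨fun x => g₁ x + g₂ x, hg₁m.add hg₂m, fun P hP => ?_⟩
    haveI := hprob P hP
    obtain ⟨hg₁i, hg₁e⟩ := hg₁ P hP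
    obtain ⟨hg₂i, hg₂e⟩ := hg₂ P hP
    refine ⟨hg₁i.add hg₂i, fun σ hσ => ?_⟩
    have hf₁i : Integrable f₁ P := SimpleFunc.integrable_iff.mpr fun y _ => measure_lt_top P _
    have hf₂i : Integrable f₂ P := SimpleFunc.integrable_iff.mpr fun y _ => measure_lt_top P _
    rw [integral_add hg₁i.integrableOn hg₂i.integrableOn, hg₁e σ hσ, hg₂e σ hσ]
    have : ∀ x, ((f₁ + f₂ : @SimpleFunc X mX ℝ)) x = f₁ x + f₂ x := fun x => rfl
    simp only [this]
    rw [integral_add hf₁i.integrableOn hf₂i.integrableOn]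

lemma commonCE_nonneg (hc : c ≤ mX) {M' : Set (@Measure X mX)}
    (hprob : ∀ P ∈ M', IsProbabilityMeasure P)
    (hsuff : IsLSSufficient mX c M') {f : X → ℝ}
    (hf : Measurable[mX] f) (hnn : ∀ x, 0 ≤ f x)
    (hfi : ∀ P ∈ M', Integrable f P) :
    CommonCE mX c M' f := by
  classical
  set F : X → ENNReal := fun x => ENNReal.ofReal (f x) with hFdef
  have hF : Measurable[mX] F := hf.ennreal_ofReal
  set fn : ℕ → @SimpleFunc X mX ℝ :=
    fun n => (SimpleFunc.eapprox F n).map ENNReal.toReal with hfndef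
  have hfn_eq : ∀ n x, ENNReal.ofReal (fn n x) = SimpleFunc.eapprox F n x := by
    intro n x
    simp only [hfndef, SimpleFunc.map_apply]
    exact ENNReal.ofReal_toReal (SimpleFunc.eapprox_lt_top F n x).ne
  have hfn_nonneg : ∀ n x, 0 ≤ fn n x := fun n x => ENNReal.toReal_nonneg
  have hfn_mono : ∀ n x, fn n x ≤ fn (n + 1) x := by
    intro n x
    have h := SimpleFunc.monotone_eapprox F (Nat.le_succ n) x
    exact ENNReal.toReal_mono (SimpleFunc.eapprox_lt_top F (n+1) x).ne h
  have hfn_le : ∀ n x, fn n x ≤ f x := by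
    intro n x
    have h1 : SimpleFunc.eapprox F n x ≤ F x := by
      rw [← SimpleFunc.iSup_eapprox_apply hF]
      exact le_iSup (fun m => SimpleFunc.eapprox F m x) n
    have h2 := ENNReal.toReal_mono (by simp [hFdef]) h1
    rwa [ENNReal.toReal_ofReal (hnn x)] at h2
  have hfn_iSup : ∀ x, ⨆ n, ENNReal.ofReal (fn n x) = F x := by
    intro x
    simp only [hfn_eq]
    exact SimpleFunc.iSup_eapprox_apply hF x
  -- choose common versions for each simple approximation
  have hch : ∀ n, CommonCE mX c M' (fn n) := fun n => commonCE_simple hc hprob hsuff (fn n)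
  choose g hg_meas hg using hch
  have hg_int : ∀ n, ∀ P ∈ M', Integrable (g n) P := fun n P hP => (hg n P hP).1
  have hg_eq : ∀ n, ∀ P ∈ M', ∀ σ, MeasurableSet[c] σ →
      ∫ x in σ, g n x ∂P = ∫ x in σ, fn n x ∂P := fun n P hP => (hg n P hP).2
  -- a.e. nonnegativity and monotonicity of the versions
  have hg_nn : ∀ n, ∀ P ∈ M', 0 ≤ᵐ[P] g n := by
    intro n P hP
    refine ae_nonneg_of_setIntegral_nonneg_subalg hc (hg_meas n) (hg_int n P hP)
      fun σ hσ => ?_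
    rw [hg_eq n P hP σ hσ]
    exact setIntegral_nonneg (hc _ hσ) fun x _ => hfn_nonneg n x
  have hg_mono : ∀ n, ∀ P ∈ M', g n ≤ᵐ[P] g (n + 1) := by
    intro n P hP
    have h := ae_nonneg_of_setIntegral_nonneg_subalg hc
      ((hg_meas (n+1)).sub (hg_meas n)) ((hg_int (n+1) P hP).sub (hg_int n P hP))
      (fun σ hσ => ?_)
    · filter_upwards [h] with x hx
      simpa [sub_nonneg] using hx
    · simp only [Pi.sub_apply]
      rw [integral_sub (hg_int (n+1) P hP).integrableOn (hg_int n P hP).integrableOn,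
        hg_eq (n+1) P hP σ hσ, hg_eq n P hP σ hσ, sub_nonneg]
      have hfa : Integrable (fn n) P := by
        haveI := hprob P hP
        exact SimpleFunc.integrable_iff.mpr fun y _ => measure_lt_top P _
      have hfb : Integrable (fn (n+1)) P := by
        haveI := hprob P hP
        exact SimpleFunc.integrable_iff.mpr fun y _ => measure_lt_top P _
      exact setIntegral_mono_on hfa.integrableOn hfb.integrableOn (hc _ hσ)
        fun x _ => hfn_mono n x
  -- the candidate limit
  set G : X → ENNReal := fun x => ⨆ n, ENNReal.ofReal (g n x) with hGdef
  have hG_measc : Measurable[c] G :=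
    Measurable.iSup fun n => (hg_meas n).ennreal_ofReal
  have hG_meas : Measurable[mX] G := hG_measc.mono hc le_rfl
  -- key lintegral identity
  have hkey : ∀ P ∈ M', ∀ σ : Set X, MeasurableSet[c] σ →
      ∫⁻ x in σ, G x ∂P = ∫⁻ x in σ, F x ∂P := by
    intro P hP σ hσ
    haveI := hprob P hP
    have hmono_ae : ∀ᵐ x ∂P, Monotone fun n => ENNReal.ofReal (g n x) := by
      have : ∀ᵐ x ∂P, ∀ n, g n x ≤ g (n+1) x := ae_all_iff.mpr fun n => hg_mono n P hP
      filter_upwards [this] with x hx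
      exact monotone_nat_of_le_succ fun n => ENNReal.ofReal_le_ofReal (hx n)
    calc ∫⁻ x in σ, G x ∂P
        = ⨆ n, ∫⁻ x in σ, ENNReal.ofReal (g n x) ∂P := by
          rw [hGdef]
          exact lintegral_iSup' (fun n => ((hg_meas n).ennreal_ofReal.mono hc le_rfl).aemeasurable.restrict)
            (ae_restrict_of_ae hmono_ae)
      _ = ⨆ n, ENNReal.ofReal (∫ x in σ, g n x ∂P) := by
          refine iSup_congr fun n => ?_
          rw [ofReal_integral_eq_lintegral_ofReal ((hg_int n P hP).integrableOn)
            (ae_restrict_of_ae (hg_nn n P hP))]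
      _ = ⨆ n, ENNReal.ofReal (∫ x in σ, fn n x ∂P) := by
          exact iSup_congr fun n => by rw [hg_eq n P hP σ hσ]
      _ = ⨆ n, ∫⁻ x in σ, ENNReal.ofReal (fn n x) ∂P := by
          refine iSup_congr fun n => ?_
          have hfa : Integrable (fn n) P :=
            SimpleFunc.integrable_iff.mpr fun y _ => measure_lt_top P _
          rw [ofReal_integral_eq_lintegral_ofReal hfa.integrableOn
            (ae_of_all _ fun x => hfn_nonneg n x)]
      _ = ∫⁻ x in σ, ⨆ n, ENNReal.ofReal (fn n x) ∂P := by
          refine (lintegral_iSup (fun n => ((fn n).measurable).ennreal_ofReal) ?_).symm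
          intro n m hnm x
          exact ENNReal.ofReal_le_ofReal (monotone_nat_of_le_succ (fun k => hfn_mono k x) hnm)
      _ = ∫⁻ x in σ, F x ∂P := by
          refine lintegral_congr fun x => ?_
          rw [hfn_iSup x]
  refine ⟨fun x => (G x).toReal, hG_measc.ennreal_toReal, fun P hP => ?_⟩
  haveI := hprob P hP
  have hFfin : ∫⁻ x, F x ∂P ≠ ⊤ := by
    have h1 : ∫⁻ x, F x ∂P ≤ ∫⁻ x, ‖f x‖₊ ∂P := by
      refine lintegral_mono fun x => ?_
      rw [← enorm_eq_nnnorm, ← ofReal_norm, Real.norm_eq_abs]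
      exact ENNReal.ofReal_le_ofReal (le_abs_self _)
    exact (lt_of_le_of_lt h1 (hfi P hP).2).ne
  have hGfin : ∫⁻ x, G x ∂P ≠ ⊤ := by
    have h := hkey P hP univ MeasurableSet.univ
    simp only [Measure.restrict_univ] at h
    rw [h]; exact hFfin
  have hG_ae_fin : ∀ᵐ x ∂P, G x < ⊤ := ae_lt_top hG_meas hGfin
  have hint : Integrable (fun x => (G x).toReal) P :=
    integrable_toReal_of_lintegral_ne_top hG_meas.aemeasurable hGfin
  refine ⟨hint, fun σ hσ => ?_⟩
  have e1 : ∫ x in σ, (G x).toReal ∂P = (∫⁻ x in σ, G x ∂P).toReal :=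
    integral_toReal (hG_meas.aemeasurable.restrict) (ae_restrict_of_ae hG_ae_fin)
  have e2 : ∫ x in σ, f x ∂P = (∫⁻ x in σ, F x ∂P).toReal := by
    have : ∀ x, f x = (F x).toReal := fun x => (ENNReal.toReal_ofReal (hnn x)).symm
    simp only [this]
    exact integral_toReal (hF.aemeasurable.restrict)
      (ae_restrict_of_ae (ae_of_all _ fun x => ENNReal.ofReal_lt_top))
  rw [e1, e2, hkey P hP σ hσ]

lemma commonCE_integrable (hc : c ≤ mX) {M' : Set (@Measure X mX)}
    (hprob : ∀ P ∈ M', IsProbabilityMeasure P)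
    (hsuff : IsLSSufficient mX c M') {f : X → ℝ}
    (hf : Measurable[mX] f) (hfi : ∀ P ∈ M', Integrable f P) :
    CommonCE mX c M' f := by
  have hp : CommonCE mX c M' (fun x => max (f x) 0) :=
    commonCE_nonneg hc hprob hsuff (hf.max measurable_const)
      (fun x => le_max_right _ _) (fun P hP => (hfi P hP).pos_part)
  have hm : CommonCE mX c M' (fun x => max (-f x) 0) :=
    commonCE_nonneg hc hprob hsuff (hf.neg.max measurable_const)
      (fun x => le_max_right _ _) (fun P hP => (hfi P hP).neg.pos_part)
  obtain ⟨g₁, hg₁m, hg₁⟩ := hp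
  obtain ⟨g₂, hg₂m, hg₂⟩ := hm
  refine ⟨fun x => g₁ x - g₂ x, hg₁m.sub hg₂m, fun P hP => ?_⟩
  obtain ⟨hg₁i, hg₁e⟩ := hg₁ P hP
  obtain ⟨hg₂i, hg₂e⟩ := hg₂ P hP
  refine ⟨hg₁i.sub hg₂i, fun σ hσ => ?_⟩
  have h3 : IntegrableOn (fun x => max (f x) 0) σ P := (hfi P hP).pos_part.integrableOn
  have h4 : IntegrableOn (fun x => max (-f x) 0) σ P := (hfi P hP).neg.pos_part.integrableOn
  rw [integral_sub hg₁i.integrableOn hg₂i.integrableOn, hg₁e σ hσ, hg₂e σ hσ,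
    ← integral_sub h3 h4]
  refine setIntegral_congr_ae (hc _ hσ) (ae_of_all _ fun x _ => ?_)
  exact max_zero_sub_max_neg_zero_eq_self (f x)

end LSJC

/-- **Theorem (main).** If for each `i ∈ I` the sub-σ-algebra `C i` is complete and
sufficient for every member of an exhaustion `(Q i η : η ∈ H i)` of the model `M`,
then `⨆ i, C i` is complete for `M`. -/
theorem partially_complete_sufficient_jointly_complete
    {X : Type*} (mX : MeasurableSpace X) {I : Type*} {H : I → Type*}
    (M : Set (@Measure X mX)) (hprob : ∀ P ∈ M, IsProbabilityMeasure P)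
    (C : I → MeasurableSpace X) (hle : ∀ i, C i ≤ mX)
    (Q : ∀ i, H i → Set (@Measure X mX))
    (hsub : ∀ i η, Q i η ⊆ M)
    (hexh : ∀ i, (⋃ η, Q i η) = M)
    (hcompl : ∀ i η, IsLSComplete mX (C i) (Q i η))
    (hsuff : ∀ i η, IsLSSufficient mX (C i) (Q i η)) :
    IsLSComplete mX (⨆ i, C i) M := by
  classical
  intro h hmeas hint hzero
  have hCle : (⨆ i, C i) ≤ mX := iSup_le hle
  have hmeas' : Measurable[mX] h := hmeas.mono hCle le_rfl
  -- Step 1: the integral of `h` vanishes on every finite intersection of sets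
  -- taken from the various `C i`.
  have hbase : ∀ (F : Finset I) (f : I → Set X), (∀ i ∈ F, MeasurableSet[C i] (f i)) →
      ∀ P ∈ M, ∫ x in ⋂ i ∈ F, f i, h x ∂P = 0 := by
    intro F
    induction F using Finset.induction_on with
    | empty =>
      intro f _ P hP
      simp only [Finset.notMem_empty, Set.iInter_of_empty, Set.iInter_univ]
      rw [Measure.restrict_univ]
      exact hzero P hP
    | @insert a F ha IH =>
      intro f hfm P hP
      have hT : MeasurableSet[mX] (⋂ i ∈ F, f i) :=
        Finset.measurableSet_biInter F fun i hi => hle i _ (hfm i (Finset.mem_insert_of_mem hi))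
      have hfa : MeasurableSet[C a] (f a) := hfm a (Finset.mem_insert_self a F)
      have hins : (⋂ i ∈ insert a F, f i) = f a ∩ ⋂ i ∈ F, f i :=
        Finset.set_biInter_insert a F f
      have hfT_meas : Measurable[mX] ((⋂ i ∈ F, f i).indicator h) := hmeas'.indicator hT
      have hfT_int : ∀ P' ∈ M, Integrable ((⋂ i ∈ F, f i).indicator h) P' :=
        fun P' hP' => (hint P' hP').indicator hT
      have hIH : ∀ P' ∈ M, ∫ x, (⋂ i ∈ F, f i).indicator h x ∂P' = 0 := by
        intro P' hP'
        rw [integral_indicator hT]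
        exact IH f (fun i hi => hfm i (Finset.mem_insert_of_mem hi)) P' hP'
      have hPmem : P ∈ ⋃ η, Q a η := (hexh a).symm ▸ hP
      obtain ⟨η, hPη⟩ := Set.mem_iUnion.mp hPmem
      obtain ⟨g, hgmeas, hg⟩ := LSJC.commonCE_integrable (hle a)
        (fun P' hP' => hprob P' (hsub a η hP')) (hsuff a η) hfT_meas
        (fun P' hP' => hfT_int P' (hsub a η hP'))
      have hgzero : ∀ P' ∈ Q a η, ∫ x, g x ∂P' = 0 := by
        intro P' hP'
        have hgi := (hg P' hP').2 Set.univ MeasurableSet.univ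
        simp only [Measure.restrict_univ] at hgi
        rw [hgi]
        exact hIH P' (hsub a η hP')
      have hgae : g =ᵐ[P] 0 :=
        hcompl a η g hgmeas (fun P' hP' => (hg P' hP').1) hgzero P hPη
      rw [hins, ← setIntegral_indicator hT, ← (hg P hPη).2 (f a) hfa]
      exact integral_eq_zero_of_ae (ae_restrict_of_ae hgae)
  -- Step 2: π-λ argument to extend to all sets of `⨆ i, C i`.
  have h_eq : (⨆ i, C i) = MeasurableSpace.generateFrom
      (piiUnionInter (fun i => {s | MeasurableSet[C i] s}) Set.univ) := by
    rw [generateFrom_piiUnionInter_measurableSet C Set.univ, iSup_univ]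
  have hpisys : IsPiSystem (piiUnionInter (fun i => {s | MeasurableSet[C i] s}) Set.univ) :=
    isPiSystem_piiUnionInter _ (fun i => @MeasurableSpace.isPiSystem_measurableSet X (C i)) Set.univ
  have hall : ∀ ⦃t : Set X⦄, MeasurableSet[⨆ i, C i] t → ∀ P ∈ M, ∫ x in t, h x ∂P = 0 := by
    refine MeasurableSpace.induction_on_inter (m := ⨆ i, C i)
      (C := fun t _ => ∀ P ∈ M, ∫ x in t, h x ∂P = 0) h_eq hpisys ?_ ?_ ?_ ?_
    · intro P hP
      rw [Measure.restrict_empty, integral_zero_measure]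
    · rintro t ⟨F, _, f, hf, rfl⟩ P hP
      exact hbase F f (fun i hi => hf i hi) P hP
    · intro t htm hpt P hP
      have h1 := integral_add_compl (hCle _ htm) (hint P hP)
      have h2 := hpt P hP
      have h3 := hzero P hP
      linarith
    · intro f hdisj hfm hpf P hP
      rw [integral_iUnion (fun i => hCle _ (hfm i)) hdisj (hint P hP).integrableOn]
      have hz : ∀ i, ∫ x in f i, h x ∂P = 0 := fun i => hpf i P hP
      simp [hz]
  intro P hP
  haveI := hprob P hP
  exact LSJC.ae_eq_zero_of_setIntegral_zero_subalg hCle hmeas (hint P hP)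
    (fun σ hσ => hall hσ P hP)
end

section
/- Let P = {P_θ : θ ∈ Θ₁ × Θ₂} be a model on (X, A) and let C₁, C₂ be sub-σ-algebras of A such that: (i) for each θ₂ ∈ Θ₂, C₁ is complete and sufficient for {P_{θ₁,θ₂} : θ₁ ∈ Θ₁}; (ii) for each θ₁ ∈ Θ₁, C₂ is complete and sufficient for {P_{θ₁,θ₂} : θ₂ ∈ Θ₂}. Then C₁ ⋁ C₂ is complete for P. -/
open MeasureTheory

open Filter Topology

open MeasureTheory Filter Topology

section Helpers

variable {X : Type*} {mX : MeasurableSpace X} {C : MeasurableSpace X}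

/-- If a `C`-measurable integrable function has zero integral over every `C`-measurable
set, it vanishes a.e. -/
lemma aux_ae_zero_of_C (hC : C ≤ mX) {P : @Measure X mX} [IsFiniteMeasure P] {f : X → ℝ}
    (hf : Measurable[C] f) (hfi : Integrable f P)
    (h0 : ∀ s, MeasurableSet[C] s → ∫ x in s, f x ∂P = 0) : f =ᵐ[P] 0 := by
  have hsm : StronglyMeasurable[C] f := hf.stronglyMeasurable
  have hfi' : Integrable f (P.trim hC) := hfi.trim hC hsm
  refine ae_eq_of_ae_eq_trim (hm := hC)
    (hfi'.ae_eq_zero_of_forall_setIntegral_eq_zero fun s hs _ => ?_)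
  rw [restrict_trim hC P hs, ← integral_trim hC hsm]
  exact h0 s hs

/-- Comparison of `C`-measurable functions from comparison of their set integrals. -/
lemma aux_ae_le_of_C (hC : C ≤ mX) {P : @Measure X mX} [IsFiniteMeasure P] {f g : X → ℝ}
    (hf : Measurable[C] f) (hg : Measurable[C] g)
    (hfi : Integrable f P) (hgi : Integrable g P)
    (h0 : ∀ s, MeasurableSet[C] s → ∫ x in s, f x ∂P ≤ ∫ x in s, g x ∂P) : f ≤ᵐ[P] g := by
  have hsm : StronglyMeasurable[C] (g - f) := (hg.sub hf).stronglyMeasurable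
  have hfi' : Integrable (g - f) (P.trim hC) := (hgi.sub hfi).trim hC hsm
  have h1 : (0 : X → ℝ) ≤ᵐ[P.trim hC] (g - f) := by
    refine ae_nonneg_of_forall_setIntegral_nonneg hfi' fun s hs _ => ?_
    rw [restrict_trim hC P hs, ← integral_trim hC hsm]
    have : ∫ x in s, (g - f) x ∂P = ∫ x in s, g x ∂P - ∫ x in s, f x ∂P := by
      simpa using integral_sub (hgi.restrict (s := s)) (hfi.restrict (s := s))
    rw [this]
    linarith [h0 s hs]
  have h2 : (0 : X → ℝ) ≤ᵐ[P] (g - f) := ae_le_of_ae_le_trim h1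
  filter_upwards [h2] with x hx
  have : (0:ℝ) ≤ g x - f x := hx
  linarith

end Helpers

section Helpers2

variable {X : Type*} {C : MeasurableSpace X} {mX : MeasurableSpace X}
  {M : Set (@Measure X mX)}

/-- From `IsLSSufficient` one can choose a conditional probability version with values
in `[0,1]` (hence integrable). -/
lemma aux_suff_clean (hC : C ≤ mX) (hM : ∀ P ∈ M, IsProbabilityMeasure P)
    (hsuff : IsLSSufficient mX C M) {A : Set X} (hA : MeasurableSet[mX] A) :
    ∃ g : X → ℝ, Measurable[C] g ∧ (∀ x, 0 ≤ g x ∧ g x ≤ 1) ∧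
      ∀ P ∈ M, ∀ s : Set X, MeasurableSet[C] s →
        ∫ x in s, g x ∂P = (P (s ∩ A)).toReal := by
  obtain ⟨g, hgm, hg⟩ := hsuff A hA
  have hclamp : Measurable[C] fun x => max 0 (min (g x) 1) :=
    Measurable.max measurable_const (Measurable.min hgm measurable_const)
  refine ⟨fun x => max 0 (min (g x) 1), hclamp, ?_, ?_⟩
  · exact fun x => ⟨le_max_left _ _, max_le (by norm_num) (min_le_right _ _)⟩
  intro P hP s hs
  haveI := hM P hP
  -- the "bad" sets have measure zero
  have hneg : ∀ n : ℕ, P {x | -(n:ℝ) ≤ g x ∧ g x ≤ -(1/(n+1))} = 0 := by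
    intro n
    set t : Set X := {x | -(n:ℝ) ≤ g x ∧ g x ≤ -(1/(n+1))} with ht
    have htm : MeasurableSet[C] t := by
      exact (hgm measurableSet_Ici).inter (hgm measurableSet_Iic)
    have hbdd : IntegrableOn g t P := by
      refine Integrable.mono' (integrable_const (n:ℝ)) (hgm.mono hC le_rfl).aestronglyMeasurable
        ((ae_restrict_iff' (hC _ htm)).2 (ae_of_all _ fun x hx => ?_))
      have h1 := hx.1; have h2 := hx.2
      rw [Real.norm_eq_abs, abs_le]
      constructor
      · linarith
      · have : (0:ℝ) < 1/(n+1) := by positivity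
        linarith
    have hup : ∫ x in t, g x ∂P ≤ -(1/(n+1)) * (P t).toReal := by
      calc ∫ x in t, g x ∂P ≤ ∫ x in t, -(1/((n:ℝ)+1)) ∂P :=
            setIntegral_mono_on hbdd (integrable_const _) (hC _ htm) fun x hx => hx.2
        _ = -(1/((n:ℝ)+1)) * (P t).toReal := by rw [setIntegral_const, smul_eq_mul, measureReal_def]; ring
    have hpos : 0 ≤ ∫ x in t, g x ∂P := by
      rw [hg P hP t htm]; positivity
    have h1 : (0:ℝ) < 1/((n:ℝ)+1) := by positivity
    have : (P t).toReal ≤ 0 := by nlinarith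
    have h2 : (P t).toReal = 0 := le_antisymm this ENNReal.toReal_nonneg
    exact (ENNReal.toReal_eq_zero_iff _).1 h2 |>.resolve_right (measure_ne_top P t)
  have hbig : ∀ n : ℕ, P {x | 1 + 1/((n:ℝ)+1) ≤ g x ∧ g x ≤ (n:ℝ)} = 0 := by
    intro n
    set t : Set X := {x | 1 + 1/((n:ℝ)+1) ≤ g x ∧ g x ≤ (n:ℝ)} with ht
    have htm : MeasurableSet[C] t := (hgm measurableSet_Ici).inter (hgm measurableSet_Iic)
    have hbdd : IntegrableOn g t P := by
      refine Integrable.mono' (integrable_const (n:ℝ)) (hgm.mono hC le_rfl).aestronglyMeasurable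
        ((ae_restrict_iff' (hC _ htm)).2 (ae_of_all _ fun x hx => ?_))
      have h1 := hx.1; have h2 := hx.2
      have : (0:ℝ) < 1/((n:ℝ)+1) := by positivity
      rw [Real.norm_eq_abs, abs_le]
      constructor <;> linarith
    have hlow : (1 + 1/((n:ℝ)+1)) * (P t).toReal ≤ ∫ x in t, g x ∂P := by
      calc (1 + 1/((n:ℝ)+1)) * (P t).toReal = ∫ x in t, (1 + 1/((n:ℝ)+1)) ∂P := by
            rw [setIntegral_const, smul_eq_mul, measureReal_def]; ring
        _ ≤ ∫ x in t, g x ∂P :=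
            setIntegral_mono_on (integrable_const _) hbdd (hC _ htm) fun x hx => hx.1
    have hup : ∫ x in t, g x ∂P ≤ (P t).toReal := by
      rw [hg P hP t htm]
      exact ENNReal.toReal_mono (measure_ne_top P t) (measure_mono Set.inter_subset_left)
    have h1 : (0:ℝ) < 1/((n:ℝ)+1) := by positivity
    have h2 : (0:ℝ) ≤ (P t).toReal := ENNReal.toReal_nonneg
    have : (P t).toReal = 0 := by nlinarith
    exact (ENNReal.toReal_eq_zero_iff _).1 this |>.resolve_right (measure_ne_top P t)
  have hae : ∀ᵐ x ∂P, 0 ≤ g x ∧ g x ≤ 1 := by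
    have hn : P {x | g x < 0} = 0 := by
      have : {x | g x < 0} ⊆ ⋃ n : ℕ, {x | -(n:ℝ) ≤ g x ∧ g x ≤ -(1/(n+1))} := by
        intro x hx
        simp only [Set.mem_setOf_eq] at hx
        obtain ⟨n, hn1, hn2⟩ : ∃ n : ℕ, -(n:ℝ) ≤ g x ∧ g x ≤ -(1/((n:ℝ)+1)) := by
          obtain ⟨n, hn⟩ := exists_nat_ge (max (-g x) (1/(-g x)))
          have hgx : 0 < -g x := by linarith
          have h1 : -g x ≤ (n:ℝ) := le_trans (le_max_left _ _) hn
          refine ⟨n, by linarith, ?_⟩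
          have h2 : 1/(-g x) ≤ (n:ℝ) := le_trans (le_max_right _ _) hn
          have h3 : 1/(-g x) ≤ (n:ℝ)+1 := by linarith
          have h4 : 1/((n:ℝ)+1) ≤ -g x := by
            rw [div_le_iff₀ (by positivity)]
            rw [div_le_iff₀ hgx] at h3
            nlinarith
          linarith
        exact Set.mem_iUnion.2 ⟨n, hn1, hn2⟩
      exact measure_mono_null this (measure_iUnion_null hneg)
    have hp : P {x | 1 < g x} = 0 := by
      have : {x | 1 < g x} ⊆ ⋃ n : ℕ, {x | 1 + 1/((n:ℝ)+1) ≤ g x ∧ g x ≤ (n:ℝ)} := by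
        intro x hx
        simp only [Set.mem_setOf_eq] at hx
        obtain ⟨n, hn⟩ := exists_nat_ge (max (g x) (1/(g x - 1)))
        have hgx : 0 < g x - 1 := by linarith
        refine Set.mem_iUnion.2 ⟨n, ?_, le_trans (le_max_left _ _) hn⟩
        have h2 : 1/(g x - 1) ≤ (n:ℝ) := le_trans (le_max_right _ _) hn
        have h3 : 1/(g x - 1) ≤ (n:ℝ)+1 := by linarith
        have h4 : 1/((n:ℝ)+1) ≤ g x - 1 := by
          rw [div_le_iff₀ (by positivity)]
          rw [div_le_iff₀ hgx] at h3
          nlinarith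
        linarith
      exact measure_mono_null this (measure_iUnion_null hbig)
    have : P ({x | g x < 0} ∪ {x | 1 < g x}) = 0 :=
      measure_union_null hn hp
    refine (measure_mono_null ?_ this : P {x | ¬(0 ≤ g x ∧ g x ≤ 1)} = 0)
    intro x hx
    simp only [Set.mem_setOf_eq, not_and_or, not_le] at hx
    rcases hx with hx | hx
    · exact Or.inl hx
    · exact Or.inr hx
  have heq : (fun x => max 0 (min (g x) 1)) =ᵐ[P] g := by
    filter_upwards [hae] with x hx
    rw [min_eq_left hx.2, max_eq_right hx.1]
  have hcongr : ∫ x in s, max 0 (min (g x) 1) ∂P = ∫ x in s, g x ∂P :=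
    setIntegral_congr_ae (hC _ hs) (heq.mono fun x hx _ => hx)
  rw [hcongr]
  exact hg P hP s hs

end Helpers2

open MeasureTheory Filter Topology

namespace JointComplete

variable {X : Type*}

/-- iterated pointwise max of `max (g k) 0` for `k ≤ n` -/
def seqmax (g : ℕ → X → ℝ) : ℕ → X → ℝ
  | 0 => fun x => max (g 0 x) 0
  | n+1 => fun x => max (seqmax g n x) (max (g (n+1) x) 0)

variable {C : MeasurableSpace X} {mX : MeasurableSpace X}

lemma seqmax_measurable {g : ℕ → X → ℝ} (hg : ∀ n, Measurable[C] (g n)) :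
    ∀ n, Measurable[C] (seqmax g n)
  | 0 => (hg 0).max measurable_const
  | n+1 => (seqmax_measurable hg n).max ((hg (n+1)).max measurable_const)

lemma seqmax_nonneg (g : ℕ → X → ℝ) : ∀ n x, 0 ≤ seqmax g n x
  | 0, x => le_max_right _ _
  | n+1, x => le_trans (seqmax_nonneg g n x) (le_max_left _ _)

lemma seqmax_mono (g : ℕ → X → ℝ) (x : X) : Monotone fun n => seqmax g n x :=
  monotone_nat_of_le_succ fun n => le_max_left _ _

end JointComplete

section CE

variable {X : Type*} {C : MeasurableSpace X} {mX : MeasurableSpace X}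
  {M : Set (@Measure X mX)}

def HasCE (C : MeasurableSpace X) {mX : MeasurableSpace X} (M : Set (@Measure X mX))
    (f : X → ℝ) : Prop :=
  ∃ g : X → ℝ, Measurable[C] g ∧ ∀ P ∈ M, Integrable g P ∧
    ∀ s : Set X, MeasurableSet[C] s → ∫ x in s, g x ∂P = ∫ x in s, f x ∂P

lemma hasCE_indicator (hC : C ≤ mX) (hM : ∀ P ∈ M, IsProbabilityMeasure P)
    (hsuff : IsLSSufficient mX C M) {A : Set X} (hA : MeasurableSet[mX] A) (c : ℝ) :
    HasCE C M (A.indicator fun _ => c) := by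
  obtain ⟨g, hgm, hg01, hg⟩ := aux_suff_clean hC hM hsuff hA
  refine ⟨fun x => c * g x, hgm.const_mul c, fun P hP => ?_⟩
  haveI := hM P hP
  have hint : Integrable (fun x => c * g x) P := by
    refine Integrable.mono' (integrable_const |c|)
      ((hgm.const_mul c).mono hC le_rfl).aestronglyMeasurable (ae_of_all _ fun x => ?_)
    rw [Real.norm_eq_abs, abs_mul]
    have h1 := (hg01 x).1; have h2 := (hg01 x).2
    have : |g x| ≤ 1 := abs_le.2 ⟨by linarith, h2⟩
    nlinarith [abs_nonneg c]
  refine ⟨hint, fun s hs => ?_⟩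
  rw [integral_const_mul, hg P hP s hs, setIntegral_indicator hA, setIntegral_const, measureReal_def,
    smul_eq_mul, mul_comm]

lemma HasCE.add {f₁ f₂ : X → ℝ} (h₁i : ∀ P ∈ M, Integrable f₁ P)
    (h₂i : ∀ P ∈ M, Integrable f₂ P) (h₁ : HasCE C M f₁) (h₂ : HasCE C M f₂) :
    HasCE C M (f₁ + f₂) := by
  obtain ⟨g₁, hg₁m, hg₁⟩ := h₁
  obtain ⟨g₂, hg₂m, hg₂⟩ := h₂
  refine ⟨g₁ + g₂, hg₁m.add hg₂m, fun P hP => ⟨(hg₁ P hP).1.add (hg₂ P hP).1, fun s hs => ?_⟩⟩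
  have e1 : ∫ x in s, (g₁ + g₂) x ∂P = ∫ x in s, g₁ x ∂P + ∫ x in s, g₂ x ∂P := by
    simpa using integral_add ((hg₁ P hP).1.restrict (s := s)) ((hg₂ P hP).1.restrict (s := s))
  have e2 : ∫ x in s, (f₁ + f₂) x ∂P = ∫ x in s, f₁ x ∂P + ∫ x in s, f₂ x ∂P := by
    simpa using integral_add ((h₁i P hP).restrict (s := s)) ((h₂i P hP).restrict (s := s))
  rw [e1, e2, (hg₁ P hP).2 s hs, (hg₂ P hP).2 s hs]

lemma simpleFunc_integrable (hM : ∀ P ∈ M, IsProbabilityMeasure P)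
    (φ : @SimpleFunc X mX ℝ) : ∀ P ∈ M, Integrable (⇑φ) P := fun P hP => by
  haveI := hM P hP
  exact (φ.memLp_top P).integrable le_top

lemma hasCE_simpleFunc (hC : C ≤ mX) (hM : ∀ P ∈ M, IsProbabilityMeasure P)
    (hsuff : IsLSSufficient mX C M) (φ : @SimpleFunc X mX ℝ) : HasCE C M ⇑φ := by
  induction φ using SimpleFunc.induction with
  | const c hs =>
    rename_i s
    have : ⇑(SimpleFunc.piecewise s hs (SimpleFunc.const X c) (SimpleFunc.const X 0))
        = s.indicator fun _ => c := by
      funext x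
      by_cases hx : x ∈ s <;>
        simp [SimpleFunc.piecewise_apply, Set.indicator_apply, hx]
    rw [this]
    exact hasCE_indicator hC hM hsuff hs c
  | add hdisj hf hg =>
    rename_i f g
    rw [SimpleFunc.coe_add]
    exact HasCE.add (simpleFunc_integrable hM f) (simpleFunc_integrable hM g) hf hg

end CE

section CE2

open MeasureTheory Filter Topology JointComplete
open scoped ENNReal NNReal

variable {X : Type*} {C : MeasurableSpace X} {mX : MeasurableSpace X}
  {M : Set (@Measure X mX)}

lemma hasCE_of_nonneg (hC : C ≤ mX) (hM : ∀ P ∈ M, IsProbabilityMeasure P)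
    (hsuff : IsLSSufficient mX C M) {f : X → ℝ} (hfm : Measurable[mX] f)
    (hf0 : ∀ x, 0 ≤ f x) (hfi : ∀ P ∈ M, Integrable f P) : HasCE C M f := by
  set F : X → ℝ≥0∞ := fun x => ENNReal.ofReal (f x) with hFdef
  have hFm : Measurable[mX] F := ENNReal.measurable_ofReal.comp hfm
  have hFne : ∀ x, F x ≠ ∞ := fun x => ENNReal.ofReal_ne_top
  set φ : ℕ → X → ℝ := fun n x => ((SimpleFunc.eapprox F n) x).toReal with hφdef
  have hφm : ∀ n, Measurable[mX] (φ n) := fun n =>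
    (SimpleFunc.measurable _).ennreal_toReal
  have hφ0 : ∀ n x, 0 ≤ φ n x := fun n x => ENNReal.toReal_nonneg
  have hφmono : ∀ x, Monotone fun n => φ n x := fun x i j hij =>
    ENNReal.toReal_mono (SimpleFunc.eapprox_lt_top F j x).ne
      (SimpleFunc.monotone_eapprox F hij x)
  have hφle : ∀ n x, φ n x ≤ f x := fun n x => by
    have h1 : (SimpleFunc.eapprox F n) x ≤ F x := by
      rw [← SimpleFunc.iSup_eapprox_apply hFm]
      exact le_iSup (fun n => (SimpleFunc.eapprox F n) x) n
    have := ENNReal.toReal_mono (hFne x) h1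
    rwa [ENNReal.toReal_ofReal (hf0 x)] at this
  have hφtend : ∀ x, Tendsto (fun n => φ n x) atTop (𝓝 (f x)) := fun x => by
    have h1 : Tendsto (fun n => (SimpleFunc.eapprox F n) x) atTop (𝓝 (F x)) := by
      rw [← SimpleFunc.iSup_eapprox_apply hFm]
      exact tendsto_atTop_iSup fun i j hij => SimpleFunc.monotone_eapprox F hij x
    have h2 := (ENNReal.tendsto_toReal (hFne x)).comp h1
    rwa [Function.comp_def, ENNReal.toReal_ofReal (hf0 x)] at h2
  have hφint : ∀ n, ∀ P ∈ M, Integrable (φ n) P := fun n P hP => by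
    refine Integrable.mono' (hfi P hP) ((hφm n).mono le_rfl le_rfl).aestronglyMeasurable
      (ae_of_all _ fun x => ?_)
    rw [Real.norm_eq_abs, abs_of_nonneg (hφ0 n x)]
    exact hφle n x
  -- common conditional expectations of the simple approximations
  have hφce : ∀ n, HasCE C M (φ n) := fun n => by
    have h := hasCE_simpleFunc hC hM hsuff ((SimpleFunc.eapprox F n).map ENNReal.toReal)
    have : ⇑((SimpleFunc.eapprox F n).map ENNReal.toReal) = φ n := by
      funext x; simp [SimpleFunc.coe_map, Function.comp, hφdef]
    rwa [this] at h
  unfold HasCE at hφce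
  choose g hgm hg using hφce
  set G : ℕ → X → ℝ := seqmax g with hGdef
  have hGm : ∀ n, Measurable[C] (G n) := seqmax_measurable hgm
  have hG0 : ∀ n x, 0 ≤ G n x := seqmax_nonneg g
  have hGmono : ∀ x, Monotone fun n => G n x := seqmax_mono g
  set GE : X → ℝ≥0∞ := fun x => ⨆ n, ENNReal.ofReal (G n x) with hGEdef
  have hGEm : Measurable[C] GE :=
    Measurable.iSup fun n => ENNReal.measurable_ofReal.comp (hGm n)
  set gl : X → ℝ := fun x => (GE x).toReal with hgldef
  have hglm : Measurable[C] gl := hGEm.ennreal_toReal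
  refine ⟨gl, hglm, fun P hP => ?_⟩
  haveI := hM P hP
  -- a.e. facts under P
  have hgle : ∀ n, g n ≤ᵐ[P] g (n+1) := fun n => by
    refine aux_ae_le_of_C hC (hgm n) (hgm (n+1)) (hg n P hP).1 (hg (n+1) P hP).1
      fun s hs => ?_
    rw [(hg n P hP).2 s hs, (hg (n+1) P hP).2 s hs]
    exact setIntegral_mono_on ((hφint n P hP).restrict) ((hφint (n+1) P hP).restrict)
      (hC _ hs) fun x _ => hφmono x (Nat.le_succ n)
  have hg0 : ∀ n, (fun _ => (0:ℝ)) ≤ᵐ[P] g n := fun n => by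
    refine aux_ae_le_of_C hC measurable_const (hgm n) (integrable_const 0) (hg n P hP).1
      fun s hs => ?_
    rw [(hg n P hP).2 s hs]
    simp only [integral_zero]
    exact setIntegral_nonneg (hC _ hs) fun x _ => hφ0 n x
  have hGae : ∀ n, G n =ᵐ[P] g n := by
    intro n
    induction n with
    | zero =>
      filter_upwards [hg0 0] with x hx
      exact max_eq_left hx
    | succ n ih =>
      filter_upwards [ih, hg0 (n+1), hgle n] with x h1 h2 h3
      show max (G n x) (max (g (n+1) x) 0) = g (n+1) x
      rw [max_eq_left h2, h1]
      exact max_eq_right h3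
  have hGint : ∀ n, Integrable (G n) P := fun n => (hg n P hP).1.congr (hGae n).symm
  have hGset : ∀ n, ∀ s : Set X, MeasurableSet[C] s →
      ∫ x in s, G n x ∂P = ∫ x in s, φ n x ∂P := fun n s hs => by
    rw [setIntegral_congr_ae (hC _ hs) ((hGae n).mono fun x hx _ => hx)]
    exact (hg n P hP).2 s hs
  have hGElint : ∫⁻ x, GE x ∂P ≤ ENNReal.ofReal (∫ x, f x ∂P) := by
    have hls : ∫⁻ x, GE x ∂P = ⨆ n, ∫⁻ x, ENNReal.ofReal (G n x) ∂P := by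
      simp only [hGEdef]
      exact lintegral_iSup
        (f := fun n x => ENNReal.ofReal (G n x))
        (fun n => ENNReal.measurable_ofReal.comp ((hGm n).mono hC le_rfl))
        (fun i j hij x => ENNReal.ofReal_le_ofReal (hGmono x hij))
    rw [hls]
    refine iSup_le fun n => ?_
    rw [← ofReal_integral_eq_lintegral_ofReal (hGint n) (ae_of_all _ fun x => hG0 n x)]
    refine ENNReal.ofReal_le_ofReal ?_
    have e : ∫ x, G n x ∂P = ∫ x, φ n x ∂P := by
      have := hGset n Set.univ MeasurableSet.univ
      simpa [Measure.restrict_univ] using this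
    rw [e]
    exact integral_mono (hφint n P hP) (hfi P hP) fun x => hφle n x
  have hGEne : ∫⁻ x, GE x ∂P ≠ ∞ :=
    (lt_of_le_of_lt hGElint ENNReal.ofReal_lt_top).ne
  have hfin : ∀ᵐ x ∂P, GE x < ∞ := ae_lt_top (hGEm.mono hC le_rfl) hGEne
  have htend : ∀ᵐ x ∂P, Tendsto (fun n => G n x) atTop (𝓝 (gl x)) := by
    filter_upwards [hfin] with x hx
    have h1 : Tendsto (fun n => ENNReal.ofReal (G n x)) atTop (𝓝 (GE x)) :=
      tendsto_atTop_iSup fun i j hij => ENNReal.ofReal_le_ofReal (hGmono x hij)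
    have h2 := (ENNReal.tendsto_toReal hx.ne).comp h1
    have h3 : (fun n => (ENNReal.ofReal (G n x)).toReal) = fun n => G n x := by
      funext n; exact ENNReal.toReal_ofReal (hG0 n x)
    rwa [Function.comp_def, h3] at h2
  have hglint : Integrable gl P := by
    have := integrable_toReal_of_lintegral_ne_top (hGEm.mono hC le_rfl).aemeasurable hGEne
    exact this
  refine ⟨hglint, fun s hs => ?_⟩
  have t1 : Tendsto (fun n => ∫ x in s, G n x ∂P) atTop (𝓝 (∫ x in s, gl x ∂P)) := by
    refine integral_tendsto_of_tendsto_of_monotone (fun n => (hGint n).restrict)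
      hglint.restrict (ae_of_all _ fun x => hGmono x) (ae_restrict_of_ae htend)
  have t2 : Tendsto (fun n => ∫ x in s, φ n x ∂P) atTop (𝓝 (∫ x in s, f x ∂P)) := by
    refine integral_tendsto_of_tendsto_of_monotone (fun n => (hφint n P hP).restrict)
      (hfi P hP).restrict (ae_of_all _ fun x => hφmono x) (ae_of_all _ fun x => hφtend x)
  have heq : (fun n => ∫ x in s, G n x ∂P) = fun n => ∫ x in s, φ n x ∂P :=
    funext fun n => hGset n s hs
  rw [heq] at t1
  exact tendsto_nhds_unique t1 t2

lemma hasCE_of_integrable (hC : C ≤ mX) (hM : ∀ P ∈ M, IsProbabilityMeasure P)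
    (hsuff : IsLSSufficient mX C M) {f : X → ℝ} (hfm : Measurable[mX] f)
    (hfi : ∀ P ∈ M, Integrable f P) : HasCE C M f := by
  have hpos : HasCE C M (fun x => max (f x) 0) :=
    hasCE_of_nonneg hC hM hsuff (hfm.max measurable_const) (fun x => le_max_right _ _)
      (fun P hP => (hfi P hP).pos_part)
  have hneg : HasCE C M (fun x => max (-f x) 0) :=
    hasCE_of_nonneg hC hM hsuff (hfm.neg.max measurable_const) (fun x => le_max_right _ _)
      (fun P hP => (hfi P hP).neg.pos_part)
  obtain ⟨gp, hgpm, hgp⟩ := hpos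
  obtain ⟨gm, hgmm, hgm⟩ := hneg
  refine ⟨fun x => gp x - gm x, hgpm.sub hgmm, fun P hP => ?_⟩
  refine ⟨((hgp P hP).1).sub ((hgm P hP).1), fun s hs => ?_⟩
  have hip : Integrable (fun x => max (f x) 0) P := (hfi P hP).pos_part
  have him : Integrable (fun x => max (-f x) 0) P := (hfi P hP).neg.pos_part
  have e1 : ∫ x in s, (gp x - gm x) ∂P = ∫ x in s, gp x ∂P - ∫ x in s, gm x ∂P :=
    integral_sub ((hgp P hP).1.restrict) ((hgm P hP).1.restrict)
  have e2 : ∫ x in s, max (f x) 0 ∂P - ∫ x in s, max (-f x) 0 ∂P = ∫ x in s, f x ∂P := by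
    rw [← integral_sub hip.restrict him.restrict]
    refine integral_congr_ae (ae_of_all _ fun x => ?_)
    simp only [Pi.sub_apply]
    rcases le_total (f x) 0 with h | h
    · rw [max_eq_right h, max_eq_left (by linarith)]; ring
    · rw [max_eq_left h, max_eq_right (by linarith)]; ring
  rw [e1, (hgp P hP).2 s hs, (hgm P hP).2 s hs]
  simpa using e2

end CE2

/-- **Corollary.** If `C₁` is complete sufficient for each submodel with fixed `θ₂`,
and `C₂` is complete sufficient for each submodel with fixed `θ₁`, then `C₁ ⊔ C₂`
is complete for the whole model `{P θ : θ ∈ Θ₁ × Θ₂}`. -/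
theorem jointly_complete_two_parameters
    {X : Type*} (mX : MeasurableSpace X) {Θ₁ Θ₂ : Type*}
    (P : Θ₁ × Θ₂ → @Measure X mX) (hprob : ∀ θ, IsProbabilityMeasure (P θ))
    (C₁ C₂ : MeasurableSpace X) (hle₁ : C₁ ≤ mX) (hle₂ : C₂ ≤ mX)
    (h₁ : ∀ θ₂ : Θ₂, IsLSComplete mX C₁ {R | ∃ θ₁, R = P (θ₁, θ₂)} ∧
      IsLSSufficient mX C₁ {R | ∃ θ₁, R = P (θ₁, θ₂)})
    (h₂ : ∀ θ₁ : Θ₁, IsLSComplete mX C₂ {R | ∃ θ₂, R = P (θ₁, θ₂)} ∧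
      IsLSSufficient mX C₂ {R | ∃ θ₂, R = P (θ₁, θ₂)}) :
    IsLSComplete mX (C₁ ⊔ C₂) (Set.range P) := by
  intro h hmeas hint hzero Q hQ
  letI mX' : MeasurableSpace X := mX
  have hm : C₁ ⊔ C₂ ≤ mX := sup_le hle₁ hle₂
  have hmeasX : Measurable[mX] h := hmeas.mono hm le_rfl
  have hint' : ∀ θ : Θ₁ × Θ₂, Integrable h (P θ) := fun θ => hint (P θ) ⟨θ, rfl⟩
  have hzero' : ∀ θ : Θ₁ × Θ₂, ∫ x, h x ∂(P θ) = 0 := fun θ => hzero (P θ) ⟨θ, rfl⟩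
  -- Step 1: the integral of h over any C₁-set vanishes under every Pθ
  have step1 : ∀ (θ₁ : Θ₁) (θ₂ : Θ₂), ∀ s : Set X, MeasurableSet[C₁] s →
      ∫ x in s, h x ∂(P (θ₁, θ₂)) = 0 := by
    intro θ₁ θ₂
    set M₁ : Set (@Measure X mX) := {R | ∃ θ₁', R = P (θ₁', θ₂)} with hM₁def
    have hM₁ : ∀ R ∈ M₁, IsProbabilityMeasure R := by
      rintro R ⟨θ, rfl⟩; exact hprob _
    obtain ⟨g, hgm, hg⟩ := hasCE_of_integrable hle₁ hM₁ (h₁ θ₂).2 hmeasX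
      (fun R hR => by obtain ⟨θ, rfl⟩ := hR; exact hint' _)
    have hgzero : ∀ R ∈ M₁, ∫ x, g x ∂ R = 0 := by
      rintro R ⟨θ, rfl⟩
      have := (hg _ ⟨θ, rfl⟩).2 Set.univ MeasurableSet.univ
      simpa [Measure.restrict_univ, hzero' (θ, θ₂)] using this
    have hgz : g =ᵐ[P (θ₁, θ₂)] 0 :=
      (h₁ θ₂).1 g hgm (fun R hR => (hg R hR).1) hgzero (P (θ₁, θ₂)) ⟨θ₁, rfl⟩
    intro s hs
    rw [← (hg _ ⟨θ₁, rfl⟩).2 s hs]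
    rw [integral_congr_ae (ae_restrict_of_ae hgz)]
    simp
  -- Step 2: the integral over any intersection of a C₁-set and a C₂-set vanishes
  have step2 : ∀ (θ : Θ₁ × Θ₂), ∀ s₁ : Set X, MeasurableSet[C₁] s₁ →
      ∀ s₂ : Set X, MeasurableSet[C₂] s₂ →
      ∫ x in s₁ ∩ s₂, h x ∂(P θ) = 0 := by
    rintro ⟨a, b⟩ s₁ hs₁ s₂ hs₂
    set M₂ : Set (@Measure X mX) := {R | ∃ θ₂', R = P (a, θ₂')} with hM₂def
    have hM₂ : ∀ R ∈ M₂, IsProbabilityMeasure R := by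
      rintro R ⟨θ, rfl⟩; exact hprob _
    set f : X → ℝ := s₁.indicator h with hfdef
    have hfm : Measurable[mX] f := hmeasX.indicator (hle₁ _ hs₁)
    have hfi : ∀ R ∈ M₂, Integrable f R := by
      rintro R ⟨θ, rfl⟩
      exact (hint' _).indicator (hle₁ _ hs₁)
    obtain ⟨g, hgm, hg⟩ := hasCE_of_integrable hle₂ hM₂ (h₂ a).2 hfm hfi
    have hgzero : ∀ R ∈ M₂, ∫ x, g x ∂ R = 0 := by
      rintro R ⟨θ, rfl⟩
      have h1 := (hg _ ⟨θ, rfl⟩).2 Set.univ MeasurableSet.univ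
      have h2 : ∫ x in Set.univ, f x ∂(P (a, θ)) = ∫ x in s₁, h x ∂(P (a, θ)) := by
        rw [Measure.restrict_univ, hfdef, integral_indicator (hle₁ _ hs₁)]
      rw [Measure.restrict_univ] at h1 h2
      rw [h1, h2, step1 a θ s₁ hs₁]
    have hgz : g =ᵐ[P (a, b)] 0 :=
      (h₂ a).1 g hgm (fun R hR => (hg R hR).1) hgzero (P (a, b)) ⟨b, rfl⟩
    have h3 : ∫ x in s₂, f x ∂(P (a, b)) = 0 := by
      rw [← (hg _ ⟨b, rfl⟩).2 s₂ hs₂, integral_congr_ae (ae_restrict_of_ae hgz)]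
      simp
    rw [hfdef, setIntegral_indicator (hle₁ _ hs₁)] at h3
    rwa [Set.inter_comm s₁ s₂]
  -- Step 3: π-system argument to get all sets in C₁ ⊔ C₂
  obtain ⟨⟨a, b⟩, rfl⟩ := hQ
  set S : Set (Set X) :=
    {t | ∃ s₁ s₂ : Set X, MeasurableSet[C₁] s₁ ∧ MeasurableSet[C₂] s₂ ∧ t = s₁ ∩ s₂}
    with hSdef
  have h_eq : (C₁ ⊔ C₂) = MeasurableSpace.generateFrom S := by
    refine le_antisymm (sup_le ?_ ?_) (MeasurableSpace.generateFrom_le ?_)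
    · intro t ht
      exact MeasurableSpace.measurableSet_generateFrom
        ⟨t, Set.univ, ht, MeasurableSet.univ, (Set.inter_univ t).symm⟩
    · intro t ht
      exact MeasurableSpace.measurableSet_generateFrom
        ⟨Set.univ, t, MeasurableSet.univ, ht, (Set.univ_inter t).symm⟩
    · rintro t ⟨s₁, s₂, hs₁, hs₂, rfl⟩
      exact ((le_sup_left : C₁ ≤ C₁ ⊔ C₂) _ hs₁).inter ((le_sup_right : C₂ ≤ C₁ ⊔ C₂) _ hs₂)
  have h_pi : IsPiSystem S := by
    rintro t ⟨s₁, s₂, hs₁, hs₂, rfl⟩ u ⟨u₁, u₂, hu₁, hu₂, rfl⟩ -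
    exact ⟨s₁ ∩ u₁, s₂ ∩ u₂, hs₁.inter hu₁, hs₂.inter hu₂, Set.inter_inter_inter_comm ..⟩
  have key : ∀ t : Set X, MeasurableSet[C₁ ⊔ C₂] t → ∫ x in t, h x ∂(P (a, b)) = 0 := by
    intro t ht
    refine MeasurableSpace.induction_on_inter (m := C₁ ⊔ C₂)
      (C := fun t _ => ∫ x in t, h x ∂(P (a, b)) = 0) h_eq h_pi ?_ ?_ ?_ ?_ t ht
    · simp
    · rintro u ⟨s₁, s₂, hs₁, hs₂, rfl⟩
      exact step2 (a, b) s₁ hs₁ s₂ hs₂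
    · intro u hu hu0
      have := integral_add_compl (hm _ hu) (hint' (a, b))
      rw [hu0, hzero' (a, b)] at this
      linarith
    · intro F hdisj hFm hF0
      rw [integral_iUnion (fun i => hm _ (hFm i)) hdisj ((hint' (a, b)).integrableOn)]
      simp [hF0]
  -- conclude h = 0 a.e.
  exact aux_ae_zero_of_C hm hmeas (hint' (a, b)) key
end

section
/- Let Q = {Q_{θ₁} : θ₁ ∈ Θ₁} be a model on (X₁, A₁) and R = {R_{θ₁,θ₂}} on (X₂, A₂), and P := {Q_{θ₁} ⊗ R_{θ₁,θ₂} : θ₁ ∈ Θ₁, θ₂ ∈ Θ₂}. Assume: (i) Q is complete; (ii) for each θ₁, the family {R_{θ₁,θ₂} : θ₂ ∈ Θ₂} is complete; (iii) for each θ₂, the family {R_{θ₁,θ₂} : θ₁ ∈ Θ₁} is homogeneous (its members are mutually absolutely continuous); (iv) every function integrable with respect to all members of P is also integrable with respect to all Q_{θ₁} ⊗ R_{θ₁',θ₂} with θ₁ ≠ θ₁'. Then P is complete. -/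
open MeasureTheory

/-- **Theorem (essentially Cramer–Kamps–Schenk, 2002).** If `Q` is complete, each family
`{R θ₁ θ₂ : θ₂}` is complete, each family `{R θ₁ θ₂ : θ₁}` is homogeneous (mutually
absolutely continuous), and every function integrable for all members of the model
`{Q θ₁ ⊗ R θ₁ θ₂}` is integrable for all `Q θ₁ ⊗ R θ₁' θ₂`, then the model
`{Q θ₁ ⊗ R θ₁ θ₂ : θ₁ ∈ Θ₁, θ₂ ∈ Θ₂}` is complete. -/
theorem cramer_kamps_schenk
    {X₁ X₂ : Type*} [mX₁ : MeasurableSpace X₁] [mX₂ : MeasurableSpace X₂]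
    {Θ₁ Θ₂ : Type*}
    (Q : Θ₁ → Measure X₁) (R : Θ₁ → Θ₂ → Measure X₂)
    (hQ : ∀ θ₁, IsProbabilityMeasure (Q θ₁))
    (hR : ∀ θ₁ θ₂, IsProbabilityMeasure (R θ₁ θ₂))
    (hQcomplete : IsLSComplete mX₁ mX₁ (Set.range Q))
    (hRcomplete : ∀ θ₁, IsLSComplete mX₂ mX₂ (Set.range (R θ₁)))
    (hhom : ∀ θ₂ θ₁ θ₁', R θ₁ θ₂ ≪ R θ₁' θ₂)
    (hint : ∀ h : X₁ × X₂ → ℝ,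
      (∀ θ₁ θ₂, Integrable h ((Q θ₁).prod (R θ₁ θ₂))) →
      ∀ θ₁ θ₁' θ₂, Integrable h ((Q θ₁).prod (R θ₁' θ₂))) :
    IsLSComplete inferInstance inferInstance
      {P : Measure (X₁ × X₂) | ∃ θ₁ θ₂, P = (Q θ₁).prod (R θ₁ θ₂)} := by
  intro h hmeas hIntM hZeroM
  haveI : ∀ θ₁, IsProbabilityMeasure (Q θ₁) := hQ
  haveI : ∀ θ₁ θ₂, IsProbabilityMeasure (R θ₁ θ₂) := hR
  have hInt : ∀ θ₁ θ₂, Integrable h ((Q θ₁).prod (R θ₁ θ₂)) :=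
    fun θ₁ θ₂ => hIntM _ ⟨θ₁, θ₂, rfl⟩
  have hZero : ∀ θ₁ θ₂, ∫ z, h z ∂((Q θ₁).prod (R θ₁ θ₂)) = 0 :=
    fun θ₁ θ₂ => hZeroM _ ⟨θ₁, θ₂, rfl⟩
  have hIntAll : ∀ θ₁ θ₁' θ₂, Integrable h ((Q θ₁).prod (R θ₁' θ₂)) := hint h hInt
  have hsm : StronglyMeasurable h := hmeas.stronglyMeasurable
  -- Step 1: marginal over the first coordinate vanishes a.e.
  have step1 : ∀ θ₁ θ₂, (fun y => ∫ x, h (x, y) ∂(Q θ₁)) =ᵐ[R θ₁ θ₂] 0 := by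
    intro θ₁ θ₂
    refine hRcomplete θ₁ _ hsm.integral_prod_left'.measurable ?_ ?_ _ ⟨θ₂, rfl⟩
    · rintro _ ⟨θ₂', rfl⟩
      exact (hInt θ₁ θ₂').integral_prod_right
    · rintro _ ⟨θ₂', rfl⟩
      rw [← integral_prod_symm h (hInt θ₁ θ₂')]
      exact hZero θ₁ θ₂'
  -- Step 2: for every measurable S in X₂ and every θ₁ θ₂, the conditional expectation
  -- of h restricted to X₁ × S vanishes Q θ₁-a.e.
  have step2 : ∀ θ₁ θ₂ (S : Set X₂), MeasurableSet S →
      (fun x => ∫ y in S, h (x, y) ∂(R θ₁ θ₂)) =ᵐ[Q θ₁] 0 := by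
    intro θ₁ θ₂ S hSm
    set hS : X₁ × X₂ → ℝ := (Set.univ ×ˢ S).indicator h with hhS
    have hSmeas : Measurable hS := hmeas.indicator (MeasurableSet.univ.prod hSm)
    have hSInt : ∀ θ₁' θ₂', Integrable hS ((Q θ₁').prod (R θ₁' θ₂')) :=
      fun θ₁' θ₂' => (hInt θ₁' θ₂').indicator (MeasurableSet.univ.prod hSm)
    have hSIntAll := hint hS hSInt
    have hsec : ∀ x, (fun y => hS (x, y)) = S.indicator (fun y => h (x, y)) := by
      intro x
      funext y
      by_cases hy : y ∈ S <;> simp [hhS, Set.indicator_apply, hy]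
    have key : (fun x => ∫ y, hS (x, y) ∂(R θ₁ θ₂)) =ᵐ[Q θ₁] 0 := by
      refine hQcomplete _ hSmeas.stronglyMeasurable.integral_prod_right'.measurable
        ?_ ?_ _ ⟨θ₁, rfl⟩
      · rintro _ ⟨θ₁'', rfl⟩
        exact (hSIntAll θ₁'' θ₁ θ₂).integral_prod_left
      · rintro _ ⟨θ₁'', rfl⟩
        rw [← integral_prod hS (hSIntAll θ₁'' θ₁ θ₂), integral_prod_symm hS (hSIntAll θ₁'' θ₁ θ₂)]
        have hsec' : ∀ y, ∫ x, hS (x, y) ∂(Q θ₁'') =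
            S.indicator (fun y => ∫ x, h (x, y) ∂(Q θ₁'')) y := by
          intro y
          by_cases hy : y ∈ S <;> simp [hhS, Set.indicator_apply, hy]
        have h0 : (fun y => ∫ x, h (x, y) ∂(Q θ₁'')) =ᵐ[R θ₁ θ₂] 0 :=
          (step1 θ₁'' θ₂).filter_mono (hhom θ₂ θ₁ θ₁'').ae_le
        have h0' : (fun y => ∫ x, hS (x, y) ∂(Q θ₁'')) =ᵐ[R θ₁ θ₂] 0 := by
          filter_upwards [h0] with y hy
          rw [hsec' y]
          by_cases hyS : y ∈ S <;> simp [Set.indicator_apply, hyS, hy]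
        rw [integral_congr_ae h0']
        simp
    filter_upwards [key] with x hx
    simp only [Pi.zero_apply] at hx ⊢
    rw [← integral_indicator hSm, ← hsec x]
    exact hx
  -- Conclusion for a fixed member of the model
  rintro P ⟨θ₁, θ₂, rfl⟩
  have keyset : ∀ A : Set (X₁ × X₂), MeasurableSet A →
      ∫ z in A, h z ∂((Q θ₁).prod (R θ₁ θ₂)) = 0 := by
    refine fun A hA => MeasurableSpace.induction_on_inter
      (C := fun A _ => ∫ z in A, h z ∂((Q θ₁).prod (R θ₁ θ₂)) = 0) generateFrom_prod.symm
      isPiSystem_prod (by simp) ?_ ?_ ?_ A hA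
    · rintro _ ⟨B, hB, S, hS, rfl⟩
      rw [setIntegral_prod h ((hInt θ₁ θ₂).integrableOn)]
      have := ae_restrict_of_ae (μ := Q θ₁) (s := B) (step2 θ₁ θ₂ S hS)
      rw [integral_congr_ae this]
      simp
    · intro t htm ht
      have := integral_add_compl htm (hInt θ₁ θ₂)
      rw [ht, hZero θ₁ θ₂] at this
      linarith
    · intro f hfd hfm hf
      rw [integral_iUnion hfm hfd (hInt θ₁ θ₂).integrableOn]
      simp [hf]
  exact (hInt θ₁ θ₂).ae_eq_zero_of_forall_setIntegral_eq_zero fun s hs _ => keyset s hs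
end

section
/- Let P be a homogeneous model on (X, A), I a set, and for each i ∈ I let C_i be a sub-σ-algebra and (P_{i,η} : η ∈ H_i) an exhaustion of P with C_i sufficient for each P_{i,η}. Assume the connectedness property: for any P', P'' ∈ P there exist n ∈ ℕ and P₁,…,P_n ∈ P with P₁ = P', P_n = P'', and for each k there exist i and η with P_k, P_{k+1} ∈ P_{i,η}. Then ⋁_{i∈I} C_i is sufficient for P. -/
open MeasureTheory

section Aux
variable {X : Type*} {C : MeasurableSpace X} [mX : MeasurableSpace X]

/-- From the sufficiency set-integral identities alone, a candidate conditional probability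
is a.e. bounded in `[0, 2]`. -/
lemma auxA_bdd (hC : C ≤ mX)
    (P : Measure X) [IsProbabilityMeasure P] {g : X → ℝ} (hg : Measurable[C] g)
    {A : Set X}
    (hint : ∀ s, MeasurableSet[C] s → ∫ x in s, g x ∂P = (P (s ∩ A)).toReal) :
    ∀ᵐ x ∂P, 0 ≤ g x ∧ g x ≤ 2 := by
  have hCset : ∀ a b : ℝ, MeasurableSet[C] {x | a ≤ g x ∧ g x ≤ b} := fun a b =>
    ((measurableSet_le measurable_const hg).inter (measurableSet_le hg measurable_const))
  have hXset : ∀ a b : ℝ, MeasurableSet[mX] {x | a ≤ g x ∧ g x ≤ b} := fun a b =>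
    hC _ (hCset a b)
  have hgm : Measurable[mX] g := hg.mono hC le_rfl
  have hio : ∀ a b : ℝ, IntegrableOn g {x | a ≤ g x ∧ g x ≤ b} P := by
    intro a b
    refine Integrable.mono' (integrable_const (μ := P.restrict {x | a ≤ g x ∧ g x ≤ b}) (max |a| |b|))
      hgm.aestronglyMeasurable.restrict ?_
    refine (ae_restrict_iff' (hXset a b)).2 (Filter.Eventually.of_forall fun x hx => ?_)
    rw [Real.norm_eq_abs, abs_le]
    constructor
    · calc -(max |a| |b|) ≤ -|a| := by simp
      _ ≤ a := neg_abs_le a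
      _ ≤ g x := hx.1
    · calc g x ≤ b := hx.2
      _ ≤ |b| := le_abs_self b
      _ ≤ max |a| |b| := le_max_right _ _
  -- sets where g is negative have measure zero
  have hneg : ∀ a b : ℝ, b < 0 → P {x | a ≤ g x ∧ g x ≤ b} = 0 := by
    intro a b hb
    set s := {x | a ≤ g x ∧ g x ≤ b} with hs
    have h1 : (0:ℝ) ≤ ∫ x in s, g x ∂P := by
      rw [hint s (hCset a b)]; exact ENNReal.toReal_nonneg
    have h2 : ∫ x in s, g x ∂P ≤ ∫ _ in s, b ∂P :=
      setIntegral_mono_on (hio a b) (integrable_const b) (hXset a b) fun x hx => hx.2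
    rw [setIntegral_const, smul_eq_mul] at h2
    have h3 : (0:ℝ) ≤ (P s).toReal * b := le_trans h1 h2
    have ht : (0:ℝ) ≤ (P s).toReal := ENNReal.toReal_nonneg
    have h5 : ¬ 0 < (P s).toReal := fun hpos =>
      absurd h3 (not_le.2 (mul_neg_of_pos_of_neg hpos hb))
    have h4 : (P s).toReal = 0 := le_antisymm (not_lt.1 h5) ht
    exact (ENNReal.toReal_eq_zero_iff _).1 h4 |>.resolve_right (measure_ne_top P s)
  have hbig : ∀ b : ℝ, P {x | 2 ≤ g x ∧ g x ≤ b} = 0 := by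
    intro b
    set s := {x | 2 ≤ g x ∧ g x ≤ b} with hs
    have h2 : ∫ _ in s, (2:ℝ) ∂P ≤ ∫ x in s, g x ∂P :=
      setIntegral_mono_on (integrable_const 2) (hio 2 b) (hXset 2 b) fun x hx => hx.1
    rw [setIntegral_const, smul_eq_mul] at h2
    have h1 : ∫ x in s, g x ∂P = (P (s ∩ A)).toReal := hint s (hCset 2 b)
    have h3 : (P (s ∩ A)).toReal ≤ (P s).toReal :=
      ENNReal.toReal_mono (measure_ne_top P s) (measure_mono Set.inter_subset_left)
    have h4 : (P s).toReal = 0 := by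
      have := h2.trans (h1 ▸ h3)
      have h0 : (0:ℝ) ≤ (P s).toReal := ENNReal.toReal_nonneg
      rw [measureReal_def] at this
      linarith
    exact (ENNReal.toReal_eq_zero_iff _).1 h4 |>.resolve_right (measure_ne_top P s)
  have hnegnull : P {x | g x < 0} = 0 := by
    have hsub : {x | g x < 0} ⊆ ⋃ n : ℕ, {x | -((n:ℝ)+1) ≤ g x ∧ g x ≤ -(1/((n:ℝ)+1))} := by
      intro x hx
      simp only [Set.mem_setOf_eq] at hx
      obtain ⟨n, hn⟩ := exists_nat_ge (max (1 / (-g x)) (-g x))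
      refine Set.mem_iUnion.2 ⟨n, ?_, ?_⟩
      · have : -g x ≤ (n:ℝ) := le_trans (le_max_right _ _) hn
        linarith
      · have h1 : 1 / (-g x) ≤ (n:ℝ) := le_trans (le_max_left _ _) hn
        have hgx : (0:ℝ) < -g x := by linarith
        rw [div_le_iff₀ hgx] at h1
        have : (1:ℝ) / ((n:ℝ)+1) ≤ -g x := by
          rw [div_le_iff₀ (by positivity)]
          nlinarith
        linarith
    refine measure_mono_null hsub (measure_iUnion_null fun n => hneg _ _ ?_)
    rw [neg_lt_zero]
    positivity
  have hbignull : P {x | 2 < g x} = 0 := by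
    have hsub : {x | 2 < g x} ⊆ ⋃ n : ℕ, {x | 2 ≤ g x ∧ g x ≤ (n:ℝ)} := by
      intro x hx
      simp only [Set.mem_setOf_eq] at hx
      obtain ⟨n, hn⟩ := exists_nat_ge (g x)
      exact Set.mem_iUnion.2 ⟨n, le_of_lt hx, hn⟩
    exact measure_mono_null hsub (measure_iUnion_null fun n => hbig _)
  rw [ae_iff]
  refine measure_mono_null (fun x hx => ?_) (measure_union_null hnegnull hbignull)
  simp only [Set.mem_setOf_eq, not_and_or, not_le] at hx
  rcases hx with h | h
  · exact Or.inl h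
  · exact Or.inr h

lemma auxA_int (hC : C ≤ mX)
    (P : Measure X) [IsProbabilityMeasure P] {g : X → ℝ} (hg : Measurable[C] g)
    {A : Set X}
    (hint : ∀ s, MeasurableSet[C] s → ∫ x in s, g x ∂P = (P (s ∩ A)).toReal) :
    Integrable g P := by
  refine Integrable.mono' (integrable_const (μ := P) 2)
    (hg.mono hC le_rfl).aestronglyMeasurable ?_
  filter_upwards [auxA_bdd hC P hg hint] with x hx
  rw [Real.norm_eq_abs, abs_le]
  exact ⟨by linarith [hx.1], hx.2⟩

end Aux

section Dens
variable {X : Type*} {C : MeasurableSpace X} [mX : MeasurableSpace X]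

/-- If for every measurable set there is a `C`-measurable common conditional-probability
version, then the Radon–Nikodym density of `ν` w.r.t. `μ` agrees a.e. with its
`C`-conditional expectation (Halmos–Savage argument). -/
lemma density_lemma (hC : C ≤ mX) (μ ν : Measure X) [IsFiniteMeasure μ] [IsFiniteMeasure ν]
    (hνμ : ν ≪ μ)
    (hpack : ∀ B : Set X, MeasurableSet[mX] B → ∃ gB : X → ℝ, Measurable[C] gB ∧
      Integrable gB μ ∧ (∀ᵐ x ∂μ, |gB x| ≤ 2) ∧
      gB =ᵐ[μ] μ[B.indicator (fun _ => (1:ℝ)) | C] ∧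
      ∫ x, gB x ∂ν = (ν B).toReal) :
    (fun x => (ν.rnDeriv μ x).toReal) =ᵐ[μ] μ[fun x => (ν.rnDeriv μ x).toReal | C] := by
  set ρ : X → ℝ := fun x => (ν.rnDeriv μ x).toReal with hρdef
  have hρ_int : Integrable ρ μ := Measure.integrable_toReal_rnDeriv
  have hρ_meas : Measurable[mX] ρ := (Measure.measurable_rnDeriv ν μ).ennreal_toReal
  set ρc : X → ℝ := μ[ρ | C] with hρc
  have hρc_int : Integrable ρc μ := integrable_condExp
  have hρc_smC : StronglyMeasurable[C] ρc := stronglyMeasurable_condExp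
  have hρc_aesm : AEStronglyMeasurable ρc μ :=
    ((hρc_smC.mono hC).aestronglyMeasurable : AEStronglyMeasurable ρc μ)
  have main : ∀ B : Set X, MeasurableSet[mX] B →
      ∫ x in B, ρc x ∂μ = (ν B).toReal := by
    intro B hB
    obtain ⟨gB, hgBm, hgBint, hgBbdd, hgBcond, hgBν⟩ := hpack B hB
    have hgB_smC : StronglyMeasurable[C] gB := hgBm.stronglyMeasurable
    have hgB_aesm : AEStronglyMeasurable gB μ := ((hgB_smC.mono hC).aestronglyMeasurable)
    set u : X → ℝ := B.indicator (fun _ => (1:ℝ)) with hu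
    have hu_int : Integrable u μ := (integrable_const (1:ℝ)).indicator hB
    have hu_aesm : AEStronglyMeasurable u μ :=
      ((measurable_const.indicator hB : Measurable[mX] u).aestronglyMeasurable)
    -- step 1 : ∫_B ρc = ∫ ρc * u
    have step1 : ∫ x in B, ρc x ∂μ = ∫ x, (ρc * u) x ∂μ := by
      rw [← integral_indicator hB]
      refine integral_congr_ae (Filter.Eventually.of_forall fun x => ?_)
      by_cases hx : x ∈ B <;>
        simp [hu, Pi.mul_apply, Set.indicator_of_mem, Set.indicator_of_notMem, hx]
    -- integrabilities
    have hρcu_int : Integrable (ρc * u) μ := by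
      refine Integrable.mono' hρc_int.abs (hρc_aesm.mul hu_aesm) ?_
      refine Filter.Eventually.of_forall fun x => ?_
      rw [Pi.mul_apply, Real.norm_eq_abs, abs_mul]
      have : |u x| ≤ 1 := by
        by_cases hx : x ∈ B <;>
          simp [hu, Set.indicator_of_mem, Set.indicator_of_notMem, hx]
      calc |ρc x| * |u x| ≤ |ρc x| * 1 := by
            exact mul_le_mul_of_nonneg_left this (abs_nonneg _)
        _ = |ρc x| := mul_one _
    have hgBρ_int : Integrable (gB * ρ) μ := by
      refine Integrable.mono' (hρ_int.abs.const_mul 2) (hgB_aesm.mul hρ_meas.aestronglyMeasurable) ?_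
      filter_upwards [hgBbdd] with x hx
      rw [Pi.mul_apply, Real.norm_eq_abs, abs_mul]
      exact mul_le_mul_of_nonneg_right hx (abs_nonneg _)
    -- pull-out computations
    have pull1 : μ[ρc * u | C] =ᵐ[μ] ρc * μ[u | C] :=
      condExp_mul_of_stronglyMeasurable_left hρc_smC hρcu_int hu_int
    have pull2 : μ[gB * ρ | C] =ᵐ[μ] gB * μ[ρ | C] :=
      condExp_mul_of_stronglyMeasurable_left hgB_smC hgBρ_int hρ_int
    have e1 : ∫ x, (ρc * u) x ∂μ = ∫ x, (ρc * μ[u | C]) x ∂μ := by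
      rw [← integral_condExp hC (f := ρc * u)]
      exact integral_congr_ae pull1
    have e2 : ∫ x, (ρc * μ[u | C]) x ∂μ = ∫ x, (gB * μ[ρ | C]) x ∂μ := by
      refine integral_congr_ae ?_
      filter_upwards [hgBcond] with x hx
      simp only [Pi.mul_apply, ← hu] at *
      rw [← hx, mul_comm]
    have e3 : ∫ x, (gB * μ[ρ | C]) x ∂μ = ∫ x, (gB * ρ) x ∂μ := by
      rw [← integral_condExp hC (f := gB * ρ)]
      exact (integral_congr_ae pull2).symm
    have e4 : ∫ x, (gB * ρ) x ∂μ = ∫ x, gB x ∂ν := by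
      rw [← integral_rnDeriv_smul hνμ]
      refine integral_congr_ae (Filter.Eventually.of_forall fun x => ?_)
      simp [hρdef, smul_eq_mul, mul_comm]
    rw [step1, e1, e2, e3, e4, hgBν]
  -- identify ρ with its conditional expectation
  exact ae_eq_of_forall_setIntegral_eq_of_sigmaFinite (μ := μ) (f := ρ) (g := ρc)
    (fun s _ _ => hρ_int.integrableOn) (fun s _ _ => hρc_int.integrableOn)
    (fun s hs _ => by rw [main s hs, Measure.setIntegral_toReal_rnDeriv hνμ s]; rfl)

end Dens

section Transfer
variable {X : Type*} {C D : MeasurableSpace X} [mX : MeasurableSpace X]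

/-- Transfer of a common conditional-probability version along a pair of measures lying in a
common submodel for which `C` is sufficient. -/
lemma transfer_lemma (hC : C ≤ mX) (hD : D ≤ mX) (hCD : C ≤ D)
    (P P' : Measure X) [IsProbabilityMeasure P] [IsProbabilityMeasure P']
    (hac : P ≪ P') (hac' : P' ≪ P)
    (hsuffp : ∀ B : Set X, MeasurableSet[mX] B → ∃ gB : X → ℝ, Measurable[C] gB ∧
      (∀ s, MeasurableSet[C] s → ∫ x in s, gB x ∂P = (P (s ∩ B)).toReal) ∧
      (∀ s, MeasurableSet[C] s → ∫ x in s, gB x ∂P' = (P' (s ∩ B)).toReal))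
    {A : Set X} (hA : MeasurableSet[mX] A)
    {g : X → ℝ} (hgmeas : Measurable[D] g)
    (hgP : ∀ s, MeasurableSet[D] s → ∫ x in s, g x ∂P = (P (s ∩ A)).toReal) :
    ∀ s, MeasurableSet[D] s → ∫ x in s, g x ∂P' = (P' (s ∩ A)).toReal := by

  set μ : Measure X := P + P' with hμdef
  have hPμ : P ≪ μ := Measure.absolutelyContinuous_of_le (Measure.le_add_right le_rfl)
  have hP'μ : P' ≪ μ := Measure.absolutelyContinuous_of_le (Measure.le_add_left le_rfl)
  have hμP : μ ≪ P :=
    Measure.AbsolutelyContinuous.add_left Measure.AbsolutelyContinuous.rfl hac'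
  -- package the sufficiency data
  have pack : ∀ B : Set X, MeasurableSet[mX] B → ∃ gB : X → ℝ, Measurable[C] gB ∧
      Integrable gB μ ∧ (∀ᵐ x ∂μ, |gB x| ≤ 2) ∧
      gB =ᵐ[μ] μ[B.indicator (fun _ => (1:ℝ)) | C] ∧
      (∫ x, gB x ∂P = (P B).toReal ∧ ∫ x, gB x ∂P' = (P' B).toReal) := by
    intro B hB
    obtain ⟨gB, hgBm, h1, h2⟩ := hsuffp B hB
    have hintP : Integrable gB P := auxA_int hC P hgBm h1
    have hintP' : Integrable gB P' := auxA_int hC P' hgBm h2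
    have hbddP := auxA_bdd hC P hgBm h1
    have hbddP' := auxA_bdd hC P' hgBm h2
    have hintμ : Integrable gB μ := hintP.add_measure hintP'
    have hbddμ : ∀ᵐ x ∂μ, |gB x| ≤ 2 := by
      rw [hμdef, ae_add_measure_iff]
      constructor
      · filter_upwards [hbddP] with x hx; rw [abs_le]; exact ⟨by linarith [hx.1], hx.2⟩
      · filter_upwards [hbddP'] with x hx; rw [abs_le]; exact ⟨by linarith [hx.1], hx.2⟩
    have hPB : ∫ x, gB x ∂P = (P B).toReal := by
      have := h1 Set.univ MeasurableSet.univ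
      rwa [setIntegral_univ, Set.univ_inter] at this
    have hP'B : ∫ x, gB x ∂P' = (P' B).toReal := by
      have := h2 Set.univ MeasurableSet.univ
      rwa [setIntegral_univ, Set.univ_inter] at this
    refine ⟨gB, hgBm, hintμ, hbddμ, ?_, hPB, hP'B⟩
    refine ae_eq_condExp_of_forall_setIntegral_eq hC
      ((integrable_const (1:ℝ)).indicator hB) (fun s _ _ => hintμ.integrableOn)
      (fun s hs _ => ?_) (hgBm.stronglyMeasurable.aestronglyMeasurable)
    have hres : μ.restrict s = P.restrict s + P'.restrict s := by
      rw [hμdef, Measure.restrict_add]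
    calc ∫ x in s, gB x ∂μ = ∫ x in s, gB x ∂P + ∫ x in s, gB x ∂P' := by
          rw [hres, integral_add_measure hintP.integrableOn hintP'.integrableOn]
      _ = (P (s ∩ B)).toReal + (P' (s ∩ B)).toReal := by rw [h1 s hs, h2 s hs]
      _ = (μ (s ∩ B)).toReal := by
          rw [hμdef, Measure.add_apply,
            ENNReal.toReal_add (measure_ne_top P _) (measure_ne_top P' _)]
      _ = ∫ x in s, B.indicator (fun _ => (1:ℝ)) x ∂μ := by
          rw [setIntegral_indicator hB, setIntegral_const, smul_eq_mul, mul_one]; rfl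
  have packP : ∀ B : Set X, MeasurableSet[mX] B → ∃ gB : X → ℝ, Measurable[C] gB ∧
      Integrable gB μ ∧ (∀ᵐ x ∂μ, |gB x| ≤ 2) ∧
      gB =ᵐ[μ] μ[B.indicator (fun _ => (1:ℝ)) | C] ∧ ∫ x, gB x ∂P = (P B).toReal :=
    fun B hB => (pack B hB).imp fun gB ⟨hm, hi, hb, hc, hP, _⟩ => ⟨hm, hi, hb, hc, hP⟩
  have packP' : ∀ B : Set X, MeasurableSet[mX] B → ∃ gB : X → ℝ, Measurable[C] gB ∧
      Integrable gB μ ∧ (∀ᵐ x ∂μ, |gB x| ≤ 2) ∧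
      gB =ᵐ[μ] μ[B.indicator (fun _ => (1:ℝ)) | C] ∧ ∫ x, gB x ∂P' = (P' B).toReal :=
    fun B hB => (pack B hB).imp fun gB ⟨hm, hi, hb, hc, _, hP'⟩ => ⟨hm, hi, hb, hc, hP'⟩
  -- densities and their `C`-measurable versions
  set σf : X → ℝ := fun x => (P.rnDeriv μ x).toReal with hσdef
  set ρf : X → ℝ := fun x => (P'.rnDeriv μ x).toReal with hρdef
  have hσeq : σf =ᵐ[μ] μ[σf | C] := density_lemma hC μ P hPμ packP
  have hρeq : ρf =ᵐ[μ] μ[ρf | C] := density_lemma hC μ P' hP'μ packP'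
  have hσpos : ∀ᵐ x ∂μ, 0 < σf x := by
    have h1 : ∀ᵐ x ∂P, 0 < P.rnDeriv μ x := Measure.rnDeriv_pos hPμ
    have h2 : ∀ᵐ x ∂μ, 0 < P.rnDeriv μ x := hμP.ae_le h1
    have h3 : ∀ᵐ x ∂μ, P.rnDeriv μ x < ⊤ := Measure.rnDeriv_lt_top P μ
    filter_upwards [h2, h3] with x hx hx'
    rw [hσdef]
    exact ENNReal.toReal_pos hx.ne' hx'.ne
  -- the `D`-measurable relative density
  set f' : X → ℝ := fun x => (μ[ρf | C]) x / (μ[σf | C]) x with hf'def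
  have hf'measC : Measurable[C] f' :=
    stronglyMeasurable_condExp.measurable.div stronglyMeasurable_condExp.measurable
  have hf'measD : Measurable[D] f' := hf'measC.mono hCD le_rfl
  have hf'meas : Measurable[mX] f' := hf'measD.mono hD le_rfl
  have key : ∀ᵐ x ∂μ, σf x * f' x = ρf x := by
    filter_upwards [hσeq, hρeq, hσpos] with x h1 h2 h3
    rw [hf'def]
    dsimp only
    rw [← h1, ← h2, mul_div_cancel₀ _ (ne_of_gt h3)]
  have hρint : Integrable ρf μ := Measure.integrable_toReal_rnDeriv
  -- f' is integrable with respect to P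
  have hf'P : Integrable f' P := by
    refine (integrable_rnDeriv_smul_iff hPμ).1 ?_
    refine Integrable.congr hρint ?_
    filter_upwards [key] with x hx
    rw [smul_eq_mul, ← hx]
  -- g is a conditional expectation of the indicator of A under P
  have hgint : Integrable g P := auxA_int hD P hgmeas hgP
  have hgcond : g =ᵐ[P] P[A.indicator (fun _ => (1:ℝ)) | D] := by
    refine ae_eq_condExp_of_forall_setIntegral_eq hD
      ((integrable_const (1:ℝ)).indicator hA) (fun s _ _ => hgint.integrableOn)
      (fun s hs _ => ?_) (hgmeas.stronglyMeasurable.aestronglyMeasurable)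
    rw [hgP s hs, setIntegral_indicator hA, setIntegral_const, smul_eq_mul, mul_one]; rfl
  -- final computation
  intro s hs
  have hsm : MeasurableSet[mX] s := hD s hs
  set t : X → ℝ := s.indicator f' with htdef
  have htmeasD : Measurable[D] t := hf'measD.indicator hs
  have htint : Integrable t P := hf'P.indicator hsm
  set uA : X → ℝ := A.indicator (fun _ => (1:ℝ)) with huAdef
  have huAint : Integrable uA P := (integrable_const (1:ℝ)).indicator hA
  have htuAint : Integrable (t * uA) P := by
    refine Integrable.mono' htint.abs
      ((htmeasD.mono hD le_rfl).aestronglyMeasurable.mul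
        ((measurable_const.indicator hA : Measurable[mX] uA).aestronglyMeasurable)) ?_
    refine Filter.Eventually.of_forall fun x => ?_
    rw [Pi.mul_apply, Real.norm_eq_abs, abs_mul]
    have : |uA x| ≤ 1 := by
      by_cases hx : x ∈ A <;>
        simp [huAdef, Set.indicator_of_mem, Set.indicator_of_notMem, hx]
    calc |t x| * |uA x| ≤ |t x| * 1 := mul_le_mul_of_nonneg_left this (abs_nonneg _)
      _ = |t x| := mul_one _
  have pull : P[(t * uA) | D] =ᵐ[P] t * P[uA | D] :=
    condExp_mul_of_stronglyMeasurable_left htmeasD.stronglyMeasurable htuAint huAint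
  calc ∫ x in s, g x ∂P'
      = ∫ x in s, ρf x • g x ∂μ := (setIntegral_rnDeriv_smul hP'μ hsm).symm
    _ = ∫ x in s, σf x • (f' x * g x) ∂μ := by
        refine integral_congr_ae (ae_restrict_of_ae ?_)
        filter_upwards [key] with x hx
        rw [smul_eq_mul, smul_eq_mul, ← hx]; ring
    _ = ∫ x in s, f' x * g x ∂P := setIntegral_rnDeriv_smul hPμ hsm
    _ = ∫ x, t x * g x ∂P := by
        rw [← integral_indicator hsm]
        refine integral_congr_ae (Filter.Eventually.of_forall fun x => ?_)
        by_cases hx : x ∈ s <;>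
          simp [htdef, Set.indicator_of_mem, Set.indicator_of_notMem, hx]
    _ = ∫ x, t x * (P[uA | D]) x ∂P := by
        refine integral_congr_ae ?_
        filter_upwards [hgcond] with x hx
        rw [hx]
    _ = ∫ x, (P[(t * uA) | D]) x ∂P := (integral_congr_ae pull).symm
    _ = ∫ x, t x * uA x ∂P := integral_condExp hD (f := t * uA)
    _ = ∫ x in s ∩ A, f' x ∂P := by
        rw [← integral_indicator (hsm.inter hA)]
        refine integral_congr_ae (Filter.Eventually.of_forall fun x => ?_)
        by_cases hx1 : x ∈ s <;> by_cases hx2 : x ∈ A <;>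
          simp [htdef, huAdef, Set.indicator_of_mem, Set.indicator_of_notMem, hx1, hx2,
            Set.mem_inter_iff]
    _ = ∫ x in s ∩ A, σf x • f' x ∂μ := (setIntegral_rnDeriv_smul hPμ (hsm.inter hA)).symm
    _ = ∫ x in s ∩ A, ρf x ∂μ := by
        refine integral_congr_ae (ae_restrict_of_ae ?_)
        filter_upwards [key] with x hx
        rw [smul_eq_mul, hx]
    _ = (P' (s ∩ A)).toReal := Measure.setIntegral_toReal_rnDeriv hP'μ _

end Transfer

/-- **Theorem (joint sufficiency under homogeneity and chain-connectedness).**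
For a homogeneous model `M` with exhaustions `(Q i η : η ∈ H i)` such that any two
members of `M` are connected by a finite chain whose consecutive members lie in a
common submodel, if each `C i` is sufficient for every `Q i η`, then `⨆ i, C i`
is sufficient for `M`. -/
theorem jointly_sufficient_of_homogeneous_connected
    {X : Type*} (mX : MeasurableSpace X) {I : Type*} {H : I → Type*}
    (M : Set (@Measure X mX)) (hprob : ∀ P ∈ M, IsProbabilityMeasure P)
    (hhom : ∀ P ∈ M, ∀ P' ∈ M, P ≪ P')
    (C : I → MeasurableSpace X) (hle : ∀ i, C i ≤ mX)
    (Q : ∀ i, H i → Set (@Measure X mX))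
    (hsub : ∀ i η, Q i η ⊆ M)
    (hexh : ∀ i, (⋃ η, Q i η) = M)
    (hconn : ∀ P' ∈ M, ∀ P'' ∈ M, ∃ n : ℕ, ∃ chain : Fin (n + 1) → @Measure X mX,
      chain 0 = P' ∧ chain (Fin.last n) = P'' ∧ (∀ k, chain k ∈ M) ∧
      ∀ k : Fin n, ∃ i, ∃ η : H i, chain k.castSucc ∈ Q i η ∧ chain k.succ ∈ Q i η)
    (hsuff : ∀ i η, IsLSSufficient mX (C i) (Q i η)) :
    IsLSSufficient mX (⨆ i, C i) M := by
  intro A hA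
  rcases Set.eq_empty_or_nonempty M with hM | ⟨P₀, hP₀⟩
  · exact ⟨0, measurable_const, fun P hP => by
      rw [hM] at hP; exact absurd hP (Set.notMem_empty P)⟩
  have hD : (⨆ i, C i) ≤ mX := iSup_le hle
  haveI : IsProbabilityMeasure P₀ := hprob P₀ hP₀
  refine ⟨P₀[A.indicator (fun _ => (1:ℝ)) | ⨆ i, C i],
    stronglyMeasurable_condExp.measurable, ?_⟩
  have hgP₀ : ∀ s, MeasurableSet[⨆ i, C i] s →
      ∫ x in s, (P₀[A.indicator (fun _ => (1:ℝ)) | ⨆ i, C i]) x ∂P₀ = (P₀ (s ∩ A)).toReal := by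
    intro s hs
    rw [setIntegral_condExp hD ((integrable_const (1:ℝ)).indicator hA) hs,
      setIntegral_indicator hA, setIntegral_const, smul_eq_mul, mul_one]; rfl
  intro P hP
  obtain ⟨n, chain, hc0, hclast, hcmem, hcstep⟩ := hconn P₀ hP₀ P hP
  have main : ∀ k : Fin (n+1), ∀ s, MeasurableSet[⨆ i, C i] s →
      ∫ x in s, (P₀[A.indicator (fun _ => (1:ℝ)) | ⨆ i, C i]) x ∂(chain k)
        = ((chain k) (s ∩ A)).toReal := by
    intro k
    induction k using Fin.induction with
    | zero => rw [hc0]; exact hgP₀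
    | succ k ih =>
      obtain ⟨i, η, hk1, hk2⟩ := hcstep k
      haveI : IsProbabilityMeasure (chain k.castSucc) := hprob _ (hcmem _)
      haveI : IsProbabilityMeasure (chain k.succ) := hprob _ (hcmem _)
      refine transfer_lemma (hle i) hD (le_iSup C i) (chain k.castSucc) (chain k.succ)
        (hhom _ (hcmem _) _ (hcmem _)) (hhom _ (hcmem _) _ (hcmem _))
        (fun B hB => ?_) hA stronglyMeasurable_condExp.measurable ih
      obtain ⟨gB, hm, hint⟩ := hsuff i η B hB
      exact ⟨gB, hm, hint _ hk1, hint _ hk2⟩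
  have := main (Fin.last n)
  rwa [hclast] at this
end

section
/- Let P be a model on (X, A) and let E₀ := {h : X → ℝ measurable, integrable with respect to every P ∈ P, with ∫ h dP = 0 for all P ∈ P}. Define O := {A ∈ A : ∫_A h dP = 0 for all h ∈ E₀ and all P ∈ P}. Then O is a sub-σ-algebra of A and contains all sets that are null under every P ∈ P. -/
open MeasureTheory

/-- The 'optimal' σ-algebra of a model `M`, as a collection of sets: all measurable
sets `A` such that `∫_A h dP = 0` for every `P ∈ M` and every measurable `h` that is
integrable with zero expectation under every member of `M`. -/
def optimalSets {X : Type*} (mX : MeasurableSpace X) (M : Set (@Measure X mX)) :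
    Set (Set X) :=
  {A | MeasurableSet[mX] A ∧
    ∀ h : X → ℝ, Measurable[mX] h → (∀ P ∈ M, Integrable h P) →
      (∀ P ∈ M, ∫ x, h x ∂P = 0) → ∀ P ∈ M, ∫ x in A, h x ∂P = 0}

section Aux

variable {X : Type*} {mX : MeasurableSpace X} {M : Set (@Measure X mX)}

lemma optimalSets_univ' : Set.univ ∈ optimalSets mX M :=
  ⟨MeasurableSet.univ, fun h _ _ hz P hP => by
    rw [Measure.restrict_univ]; exact hz P hP⟩

lemma optimalSets_compl' {s : Set X} (hs : s ∈ optimalSets mX M) :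
    sᶜ ∈ optimalSets mX M := by
  refine ⟨hs.1.compl, fun h hm hi hz P hP => ?_⟩
  have := integral_add_compl hs.1 (hi P hP)
  have h0 := hs.2 h hm hi hz P hP
  have h00 := hz P hP
  linarith

lemma optimalSets_inter' {s t : Set X} (hs : s ∈ optimalSets mX M)
    (ht : t ∈ optimalSets mX M) : s ∩ t ∈ optimalSets mX M := by
  refine ⟨hs.1.inter ht.1, fun h hm hi hz P hP => ?_⟩
  have key := hs.2 (t.indicator h) (hm.indicator ht.1)
    (fun Q hQ => (hi Q hQ).indicator ht.1)
    (fun Q hQ => by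
      rw [integral_indicator ht.1]
      exact ht.2 h hm hi hz Q hQ) P hP
  rwa [setIntegral_indicator ht.1] at key

lemma optimalSets_union' {s t : Set X} (hs : s ∈ optimalSets mX M)
    (ht : t ∈ optimalSets mX M) : s ∪ t ∈ optimalSets mX M := by
  have : s ∪ t = (sᶜ ∩ tᶜ)ᶜ := by simp [Set.compl_inter]
  rw [this]
  exact optimalSets_compl' (optimalSets_inter' (optimalSets_compl' hs) (optimalSets_compl' ht))

lemma optimalSets_iUnion' (f : ℕ → Set X) (hf : ∀ n, f n ∈ optimalSets mX M) :
    (⋃ n, f n) ∈ optimalSets mX M := by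
  have hacc : ∀ n, Set.accumulate f n ∈ optimalSets mX M := by
    intro n
    induction n with
    | zero =>
        have : Set.accumulate f 0 = f 0 := by
          ext x; simp [Set.accumulate_def]
        rw [this]; exact hf 0
    | succ n ih =>
        have : Set.accumulate f (n + 1) = Set.accumulate f n ∪ f (n + 1) := by
          ext x
          simp only [Set.accumulate_def, Set.mem_iUnion, Set.mem_union, Nat.le_add_one_iff]
          aesop
        rw [this]; exact optimalSets_union' ih (hf (n + 1))
  have hU : (⋃ n, Set.accumulate f n) = ⋃ n, f n := Set.iUnion_accumulate
  refine ⟨MeasurableSet.iUnion fun n => (hf n).1, fun h hm hi hz P hP => ?_⟩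
  have htend : Filter.Tendsto (fun n => ∫ x in Set.accumulate f n, h x ∂P)
      Filter.atTop (nhds (∫ x in ⋃ n, Set.accumulate f n, h x ∂P)) := by
    refine tendsto_setIntegral_of_monotone (fun n => (hacc n).1)
      Set.monotone_accumulate ?_
    exact (hi P hP).integrableOn
  have heq : (fun n => ∫ x in Set.accumulate f n, h x ∂P) = fun _ => (0 : ℝ) := by
    funext n; exact (hacc n).2 h hm hi hz P hP
  rw [heq] at htend
  have h2 := tendsto_nhds_unique htend tendsto_const_nhds
  rw [hU] at h2
  exact h2

lemma optimalSets_null' {N : Set X} (hN : MeasurableSet[mX] N)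
    (h0 : ∀ P ∈ M, P N = 0) : N ∈ optimalSets mX M := by
  refine ⟨hN, fun h hm hi hz P hP => ?_⟩
  rw [Measure.restrict_eq_zero.2 (h0 P hP), integral_zero_measure]

end Aux

/-- **Theorem.** The collection `optimalSets mX M` is a sub-σ-algebra of `mX`
(contains `univ`, is closed under complements and countable unions) and contains
every set that is null under every `P ∈ M`. -/
theorem optimalSets_is_sigma_algebra_and_contains_null_sets
    {X : Type*} (mX : MeasurableSpace X) (M : Set (@Measure X mX))
    (hprob : ∀ P ∈ M, IsProbabilityMeasure P) :
    Set.univ ∈ optimalSets mX M ∧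
      (∀ s ∈ optimalSets mX M, sᶜ ∈ optimalSets mX M) ∧
      (∀ f : ℕ → Set X, (∀ n, f n ∈ optimalSets mX M) →
        (⋃ n, f n) ∈ optimalSets mX M) ∧
      (∀ N : Set X, MeasurableSet[mX] N → (∀ P ∈ M, P N = 0) →
        N ∈ optimalSets mX M) :=
  ⟨optimalSets_univ', fun _ hs => optimalSets_compl' hs,
    fun f hf => optimalSets_iUnion' f hf, fun _ hN h0 => optimalSets_null' hN h0⟩
end

section
/- Let P be a model on (X, A), O its optimal σ-algebra, and C a sufficient sub-σ-algebra for P. Then O ⊆ C up to P-null sets: for every A ∈ O there exists C ∈ C with P(A Δ C) = 0 for all P ∈ P. -/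
open MeasureTheory

open MeasureTheory

/-- Helper: if the set integral of a `C`-measurable `f` is nonnegative over every
`C`-measurable set on which `f` is integrable, then `f ≥ 0` a.e. -/
lemma ae_nonneg_of_setIntegral_nonneg' {X : Type*} {C : MeasurableSpace X} {mX : MeasurableSpace X} (hle : C ≤ mX) (P : @Measure X mX) [IsFiniteMeasure P]
    {f : X → ℝ} (hfC : Measurable[C] f)
    (hint : ∀ s : Set X, MeasurableSet[C] s → IntegrableOn f s P →
      0 ≤ ∫ x in s, f x ∂P) :
    ∀ᵐ x ∂P, 0 ≤ f x := by
  have hfm : Measurable[mX] f := hfC.mono hle le_rfl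
  -- the slices
  set s : ℕ → Set X := fun n => {x | f x < 0} ∩ {x | -((n : ℝ) + 1) ≤ f x} with hs
  have hsC : ∀ n, MeasurableSet[C] (s n) := by
    intro n
    exact (hfC measurableSet_Iio).inter (hfC measurableSet_Ici)
  have hsm : ∀ n, MeasurableSet[mX] (s n) := fun n => hle _ (hsC n)
  have hnull : ∀ n, P (s n) = 0 := by
    intro n
    have hbound : ∀ x ∈ s n, ‖f x‖ ≤ (n : ℝ) + 1 := by
      intro x hx
      rw [Real.norm_eq_abs, abs_le]
      exact ⟨hx.2, le_trans hx.1.le (by positivity)⟩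
    have hintOn : IntegrableOn f (s n) P := by
      refine Integrable.mono' (integrable_const ((n : ℝ) + 1))
        hfm.aestronglyMeasurable ?_
      exact (ae_restrict_iff' (hsm n)).mpr (ae_of_all _ hbound)
    have h1 : 0 ≤ ∫ x in s n, f x ∂P := hint _ (hsC n) hintOn
    have h2 : ∫ x in s n, (-f) x ∂P = 0 := by
      have hge : 0 ≤ ∫ x in s n, (-f) x ∂P :=
        setIntegral_nonneg (hsm n) (fun x hx => by simpa using hx.1.le)
      have : ∫ x in s n, (-f) x ∂P = - ∫ x in s n, f x ∂P := by
        simp [integral_neg]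
      linarith
    have hae : (fun x => (-f) x) =ᵐ[P.restrict (s n)] 0 := by
      rw [← integral_eq_zero_iff_of_nonneg_ae _ hintOn.neg]
      · exact h2
      · exact (ae_restrict_iff' (hsm n)).mpr (ae_of_all _ (fun x hx => by simpa using hx.1.le))
    have hnullr : P.restrict (s n) {x | (-f) x ≠ 0} = 0 := by
      simpa [Filter.EventuallyEq, ae_iff] using hae
    have hsub : s n ⊆ {x | (-f) x ≠ 0} := by
      intro x hx
      have := hx.1
      simp only [Set.mem_setOf_eq] at this ⊢
      intro h
      simp only [Pi.neg_apply, neg_eq_zero] at h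
      exact absurd h (ne_of_lt this)
    have : P.restrict (s n) (s n) = 0 :=
      measure_mono_null hsub hnullr
    rwa [Measure.restrict_apply_self] at this
  have hcover : {x | f x < 0} ⊆ ⋃ n, s n := by
    intro x hx
    obtain ⟨n, hn⟩ := exists_nat_ge (-(f x))
    exact Set.mem_iUnion.mpr ⟨n, hx, by simp only [Set.mem_setOf_eq]; linarith⟩
  have : P {x | f x < 0} = 0 :=
    measure_mono_null hcover (measure_iUnion_null hnull)
  filter_upwards [measure_eq_zero_iff_ae_notMem.mp this] with x hx
  simpa using not_lt.mp hx

lemma optimal_subset_sufficient_aux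
    {X : Type*} {C : MeasurableSpace X} {mX : MeasurableSpace X} (hle : C ≤ mX)
    (M : Set (@Measure X mX)) (hprob : ∀ P ∈ M, IsProbabilityMeasure P)
    (hsuff : IsLSSufficient mX C M) :
    ∀ A ∈ optimalSets mX M,
      ∃ t : Set X, MeasurableSet[C] t ∧ ∀ P ∈ M, P (symmDiff A t) = 0 := by
  intro A hA
  obtain ⟨hAm, hopt⟩ := hA
  obtain ⟨g, hgC, hg⟩ := hsuff A hAm
  have hgm : Measurable[mX] g := hgC.mono hle le_rfl
  -- a.e. bounds `0 ≤ g ≤ 1` and integrability, for each `P ∈ M`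
  have key : ∀ P ∈ M, (∀ᵐ x ∂P, 0 ≤ g x ∧ g x ≤ 1) ∧ Integrable g P := by
    intro P hP
    haveI := hprob P hP
    have h0 : ∀ᵐ x ∂P, 0 ≤ g x := by
      refine ae_nonneg_of_setIntegral_nonneg' hle P hgC ?_
      intro s hs _
      rw [hg P hP s hs]
      exact ENNReal.toReal_nonneg
    have h1 : ∀ᵐ x ∂P, 0 ≤ 1 - g x := by
      refine ae_nonneg_of_setIntegral_nonneg' hle P (measurable_const.sub hgC) ?_
      intro s hs hint
      have hsm : MeasurableSet[mX] s := hle _ hs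
      have hgint : IntegrableOn g s P := by
        have : IntegrableOn (fun x => (1 : ℝ) - (1 - g x)) s P :=
          ((integrableOn_const_iff (C := (1 : ℝ))).mpr (Or.inr (measure_lt_top P s))).sub hint
        simpa using this
      have hsplit : ∫ x in s, (1 - g x) ∂P
          = (P s).toReal - ∫ x in s, g x ∂P := by
        rw [integral_sub ((integrableOn_const_iff (C := (1 : ℝ))).mpr (Or.inr (measure_lt_top P s))) hgint]
        simp [measureReal_def]
      rw [hsplit, hg P hP s hs, sub_nonneg]
      exact ENNReal.toReal_le_toReal (measure_ne_top P _) (measure_ne_top P _)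
        |>.mpr (measure_mono (Set.inter_subset_left))
    have hbd : ∀ᵐ x ∂P, 0 ≤ g x ∧ g x ≤ 1 := by
      filter_upwards [h0, h1] with x hx0 hx1
      exact ⟨hx0, by linarith⟩
    refine ⟨hbd, ?_⟩
    refine Integrable.mono' (integrable_const (1 : ℝ)) hgm.aestronglyMeasurable ?_
    filter_upwards [hbd] with x hx
    rw [Real.norm_eq_abs, abs_le]
    exact ⟨by linarith [hx.1], hx.2⟩
  -- the candidate set
  refine ⟨{x | g x = 1}, hgC (measurableSet_singleton 1), ?_⟩
  -- the estimator `h = 1_A - g` is unbiased with zero expectation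
  set h : X → ℝ := fun x => A.indicator (fun _ => (1 : ℝ)) x - g x with hh
  have hhm : Measurable[mX] h := (measurable_const.indicator hAm).sub hgm
  have hhint : ∀ P ∈ M, Integrable h P := by
    intro P hP
    haveI := hprob P hP
    exact ((integrable_const (1 : ℝ)).indicator hAm).sub (key P hP).2
  have hgtot : ∀ P ∈ M, ∫ x, g x ∂P = (P A).toReal := by
    intro P hP
    have := hg P hP Set.univ MeasurableSet.univ
    rwa [setIntegral_univ, Set.univ_inter] at this
  have hhzero : ∀ P ∈ M, ∫ x, h x ∂P = 0 := by
    intro P hP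
    haveI := hprob P hP
    rw [hh, integral_sub ((integrable_const (1 : ℝ)).indicator hAm) (key P hP).2,
      integral_indicator_const _ hAm, hgtot P hP]
    simp [measureReal_def]
  have hoptA := hopt h hhm hhint hhzero
  intro P hP
  haveI := hprob P hP
  have hgint := (key P hP).2
  have hbd := (key P hP).1
  -- `∫_A g = P A`
  have hAg : ∫ x in A, g x ∂P = (P A).toReal := by
    have h0 := hoptA P hP
    rw [hh, integral_sub (((integrable_const (1 : ℝ)).indicator hAm).integrableOn)
      hgint.integrableOn, setIntegral_indicator hAm, Set.inter_self,
      setIntegral_const] at h0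
    simp only [smul_eq_mul, mul_one, measureReal_def] at h0
    linarith
  -- `g = 1` a.e. on `A`
  have hf1 : (A.indicator (fun x => 1 - g x)) =ᵐ[P] 0 := by
    have hint1 : Integrable (A.indicator (fun x => 1 - g x)) P :=
      ((integrable_const (1 : ℝ)).sub hgint).indicator hAm
    have hnn : 0 ≤ᵐ[P] A.indicator (fun x => 1 - g x) := by
      filter_upwards [hbd] with x hx
      by_cases hxA : x ∈ A
      · simpa [Set.indicator_of_mem hxA] using by linarith [hx.2]
      · simp [Set.indicator_of_notMem hxA]
    rw [← integral_eq_zero_iff_of_nonneg_ae hnn hint1]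
    rw [integral_indicator hAm,
      integral_sub ((integrableOn_const_iff (C := (1 : ℝ))).mpr (Or.inr (measure_lt_top P A))) hgint.integrableOn,
      hAg, setIntegral_const]
    simp [measureReal_def]
  -- `g = 0` a.e. on `Aᶜ`
  have hf2 : (Aᶜ.indicator g) =ᵐ[P] 0 := by
    have hint2 : Integrable (Aᶜ.indicator g) P := hgint.indicator hAm.compl
    have hnn : 0 ≤ᵐ[P] Aᶜ.indicator g := by
      filter_upwards [hbd] with x hx
      by_cases hxA : x ∈ Aᶜ
      · simpa [Set.indicator_of_mem hxA] using hx.1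
      · simp [Set.indicator_of_notMem hxA]
    rw [← integral_eq_zero_iff_of_nonneg_ae hnn hint2]
    rw [integral_indicator hAm.compl]
    have hadd := integral_add_compl hAm hgint
    rw [hAg] at hadd
    rw [hgtot P hP] at hadd
    linarith
  -- conclude
  rw [Set.symmDiff_def]
  refine measure_union_null ?_ ?_
  · refine measure_mono_null (fun x hx => ?_)
      (by simpa [Filter.EventuallyEq, ae_iff] using hf1 :
        P {x | A.indicator (fun x => 1 - g x) x ≠ 0} = 0)
    obtain ⟨hxA, hxt⟩ := hx
    simp only [Set.mem_setOf_eq, Set.indicator_of_mem hxA]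
    simp only [Set.mem_setOf_eq] at hxt
    intro hc
    exact hxt (by linarith)
  · refine measure_mono_null (fun x hx => ?_)
      (by simpa [Filter.EventuallyEq, ae_iff] using hf2 :
        P {x | Aᶜ.indicator g x ≠ 0} = 0)
    obtain ⟨hxt, hxA⟩ := hx
    simp only [Set.mem_setOf_eq] at hxt
    simp only [Set.mem_setOf_eq, Set.indicator_of_mem (Set.mem_compl hxA), hxt]
    norm_num


/-- **Theorem.** If `C` is sufficient for `M`, then the optimal σ-algebra is contained
in `C` up to `M`-null sets: every `A ∈ optimalSets mX M` agrees with some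
`C`-measurable set up to a set that is null under every `P ∈ M`. -/
theorem optimal_sigma_algebra_subset_sufficient
    {X : Type*} (mX : MeasurableSpace X) (M : Set (@Measure X mX))
    (hprob : ∀ P ∈ M, IsProbabilityMeasure P)
    (C : MeasurableSpace X) (hle : C ≤ mX) (hsuff : IsLSSufficient mX C M) :
    ∀ A ∈ optimalSets mX M,
      ∃ t : Set X, MeasurableSet[C] t ∧ ∀ P ∈ M, P (symmDiff A t) = 0 :=
  optimal_subset_sufficient_aux hle M hprob hsuff
end

section
/- Let (X, A, μ) be a measure space, E ⊆ A a collection of measurable sets, n ∈ ℕ, and consider the model P := {μ(·|E)^{⊗n} : E ∈ E, 0 < μ(E) < ∞} of n-fold products of conditional laws, on (Xⁿ, A^{⊗n}). Let C := σ(Eⁿ : E ∈ E) be the σ-algebra on Xⁿ generated by the n-fold products of members of E. If μ is σ-finite then C is sufficient for P. -/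
open MeasureTheory MeasurableSpace Set
open scoped ENNReal

/-- The conditional law `μ(·|E) = μ(· ∩ E)/μ(E)`. -/
noncomputable def condLaw {X : Type*} [mX : MeasurableSpace X] (μ : Measure X)
    (E : Set X) : Measure X :=
  (μ E)⁻¹ • μ.restrict E

section Aux

variable {X : Type*} [mX : MeasurableSpace X]


lemma condLaw_isProbability (μ : Measure X) {E : Set X} (h0 : μ E ≠ 0) (ht : μ E ≠ ⊤) :
    IsProbabilityMeasure (condLaw μ E) := by
  constructor
  simp [condLaw, Measure.restrict_apply_univ, ENNReal.inv_mul_cancel h0 ht]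

lemma pi_box (μ : Measure X) [SigmaFinite μ] (n : ℕ) {E : Set X} (hE : MeasurableSet E) :
    (Measure.pi fun _ : Fin n => μ) (Set.univ.pi fun _ => E) = μ E ^ n := by
  rw [Measure.pi_pi]; simp

lemma condLaw_pi_eq (μ : Measure X) [SigmaFinite μ] (n : ℕ) {E : Set X}
    (hE : MeasurableSet E) (h0 : μ E ≠ 0) (ht : μ E ≠ ⊤) :
    (Measure.pi fun _ : Fin n => condLaw μ E)
      = (μ E ^ n)⁻¹ • (Measure.pi fun _ : Fin n => μ).restrict (Set.univ.pi fun _ => E) := by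
  haveI := condLaw_isProbability μ h0 ht
  refine Measure.pi_eq fun s hs => ?_
  rw [Measure.smul_apply, Measure.restrict_apply (MeasurableSet.univ_pi hs), smul_eq_mul]
  have hset : (Set.univ.pi s) ∩ (Set.univ.pi fun _ : Fin n => E)
      = Set.univ.pi (fun i => s i ∩ E) := by
    rw [← Set.pi_inter_distrib]
  rw [hset, Measure.pi_pi]
  have hterm : ∀ i : Fin n, condLaw μ E (s i) = (μ E)⁻¹ * μ (s i ∩ E) := by
    intro i
    rw [condLaw, Measure.smul_apply, Measure.restrict_apply (hs i), smul_eq_mul]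
  simp_rw [hterm]
  rw [Finset.prod_mul_distrib, Finset.prod_const, Finset.card_univ, Fintype.card_fin,
    ← ENNReal.inv_pow]


lemma abstract_sufficiency {Y : Type*} [mY : MeasurableSpace Y] (ν : Measure Y)
    [SigmaFinite ν] {C : MeasurableSpace Y} (hC : C ≤ mY) {ι : Type*} [Nonempty ι]
    (B : ι → Set Y) (hB : ∀ i, MeasurableSet[C] (B i))
    (h0 : ∀ i, ν (B i) ≠ 0) (ht : ∀ i, ν (B i) ≠ ⊤)
    {A : Set Y} (hA : MeasurableSet[mY] A) :
    ∃ g : Y → ℝ, Measurable[C] g ∧ ∀ i, ∀ s : Set Y, MeasurableSet[C] s →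
      ∫ x in s, g x ∂((ν (B i))⁻¹ • ν.restrict (B i))
        = (((ν (B i))⁻¹ • ν.restrict (B i)) (s ∩ A)).toReal := by
  classical
  obtain ⟨ν', hν'fin, hνν', hν'ν⟩ := exists_isFiniteMeasure_absolutelyContinuous ν
  haveI := hν'fin
  -- the optimal value
  set c : ℝ≥0∞ := ⨆ T : ℕ → ι, ν' (⋃ m, B (T m)) with hc
  have hcfin : c ≠ ⊤ :=
    ne_top_of_le_ne_top (measure_ne_top ν' Set.univ)
      (iSup_le fun T => measure_mono (Set.subset_univ _))
  have hTk : ∀ k : ℕ, ∃ T : ℕ → ι, c - ((k : ℝ≥0∞) + 1)⁻¹ ≤ ν' (⋃ m, B (T m)) := by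
    intro k
    rcases eq_or_ne c 0 with hc0 | hc0
    · exact ⟨Classical.arbitrary _, by simp [hc0]⟩
    · have hlt : c - ((k : ℝ≥0∞) + 1)⁻¹ < c :=
        ENNReal.sub_lt_self hcfin hc0 (by simp)
      rw [hc] at hlt
      obtain ⟨T, hT⟩ := lt_iSup_iff.mp hlt
      exact ⟨T, hT.le⟩
  choose Tk hTk' using hTk
  set T : ℕ → ι := fun m => Tk m.unpair.1 m.unpair.2 with hT
  set U : Set Y := ⋃ m, B (T m) with hU
  have hUmeasC : MeasurableSet[C] U := MeasurableSet.iUnion fun m => hB _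
  have hUmeas : MeasurableSet[mY] U := hC _ hUmeasC
  have hUc : ν' U = c := by
    refine le_antisymm (hc ▸ le_iSup (fun T : ℕ → ι => ν' (⋃ m, B (T m))) T) ?_
    refine ENNReal.le_of_forall_pos_le_add fun ε hε _ => ?_
    obtain ⟨k, hk⟩ := ENNReal.exists_inv_nat_lt (show (ε : ℝ≥0∞) ≠ 0 by
      exact_mod_cast hε.ne')
    have hsub : (⋃ m, B (Tk k m)) ⊆ U := by
      refine Set.iUnion_subset fun m => ?_
      have : B (Tk k m) = B (T (Nat.pair k m)) := by
        simp [hT, Nat.unpair_pair]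
      rw [this, hU]
      exact Set.subset_iUnion (fun m' => B (T m')) (Nat.pair k m)
    have h1 : c - ((k : ℝ≥0∞) + 1)⁻¹ ≤ ν' U := (hTk' k).trans (measure_mono hsub)
    have h2 : c ≤ ν' U + ((k : ℝ≥0∞) + 1)⁻¹ := tsub_le_iff_right.mp h1
    refine h2.trans (add_le_add le_rfl ?_)
    calc ((k : ℝ≥0∞) + 1)⁻¹ ≤ ((k : ℝ≥0∞))⁻¹ := ENNReal.inv_le_inv' le_self_add
    _ ≤ ε := hk.le
  have hmax : ∀ i : ι, ν (B i \ U) = 0 := by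
    intro G
    refine hνν' ?_
    have hunion : B G ∪ U = ⋃ m, B ((fun m => Nat.casesOn m G T : ℕ → ι) m) := by
      ext x
      constructor
      · rintro (hx | hx)
        · exact Set.mem_iUnion.2 ⟨0, hx⟩
        · rw [hU] at hx
          obtain ⟨m, hm⟩ := Set.mem_iUnion.1 hx
          exact Set.mem_iUnion.2 ⟨m + 1, hm⟩
      · intro hx
        obtain ⟨m, hm⟩ := Set.mem_iUnion.1 hx
        cases m with
        | zero => exact Or.inl hm
        | succ m' => exact Or.inr (hU ▸ Set.mem_iUnion.2 ⟨m', hm⟩)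
    have h1 : ν' (B G ∪ U) ≤ c := by
      rw [hunion, hc]
      exact le_iSup (fun T : ℕ → ι => ν' (⋃ m, B (T m))) _
    have h2 : ν' (B G \ U) + ν' U = ν' (B G ∪ U) := by
      have h2' := measure_union (μ := ν') (disjoint_sdiff_left : Disjoint (B G \ U) U) hUmeas
      rw [Set.diff_union_self] at h2'
      exact h2'.symm
    have h3 : ν' (B G \ U) + ν' U ≤ 0 + ν' U := by
      rw [zero_add, h2, ← hUc] at *
      exact h1
    have := ENNReal.le_of_add_le_add_right (measure_ne_top ν' U) h3
    exact le_antisymm this zero_le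
  -- the mixture density
  set b : ℕ → ℝ≥0∞ := fun m => (2 ^ (m + 1))⁻¹ * (ν (B (T m)))⁻¹ with hb
  have hb0 : ∀ m, b m ≠ 0 := fun m =>
    mul_ne_zero (ENNReal.inv_ne_zero.2 (by simp)) (ENNReal.inv_ne_zero.2 (ht _))
  set h : Y → ℝ≥0∞ := fun x => ∑' m, b m * (B (T m)).indicator 1 x with hh
  have hhC : Measurable[C] h :=
    Measurable.ennreal_tsum fun m =>
      ((measurable_one.indicator (hB (T m))).const_mul (b m))
  have hhm : Measurable[mY] h := hhC.mono hC le_rfl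
  have hhpos : ∀ x ∈ U, h x ≠ 0 := by
    intro x hx h0x
    rw [hU] at hx
    obtain ⟨m, hm⟩ := Set.mem_iUnion.1 hx
    have hle : b m * (B (T m)).indicator 1 x ≤ h x :=
      ENNReal.le_tsum (f := fun m => b m * (B (T m)).indicator 1 x) m
    rw [h0x, Set.indicator_of_mem hm, Pi.one_apply, mul_one] at hle
    exact hb0 m (le_antisymm hle zero_le)
  have hhzero : ∀ x, x ∉ U → h x = 0 := by
    intro x hx
    rw [hh]
    have : ∀ m, b m * (B (T m)).indicator 1 x = 0 := by
      intro m
      have hxm : x ∉ B (T m) := fun hxm => hx (hU ▸ Set.mem_iUnion.2 ⟨m, hxm⟩)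
      rw [Set.indicator_of_notMem hxm, mul_zero]
    simp only [this, tsum_zero]
  set lam : @Measure Y mY := ν.withDensity h with hlam
  have hlamuniv : lam Set.univ ≤ 2 := by
    have h1 : lam Set.univ = ∑' m, b m * ν (B (T m)) := by
      rw [hlam, withDensity_apply _ MeasurableSet.univ, Measure.restrict_univ, hh]
      rw [lintegral_tsum fun m =>
        (((measurable_one.indicator (hB (T m))).const_mul (b m)).mono hC le_rfl).aemeasurable]
      congr 1
      ext m
      rw [lintegral_const_mul _ ((measurable_one.indicator (hB (T m))).mono hC le_rfl),
        lintegral_indicator_one (hC _ (hB (T m)))]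
    have h2 : ∀ m : ℕ, b m * ν (B (T m)) ≤ (2 : ℝ≥0∞)⁻¹ ^ (m + 1) := by
      intro m
      rw [hb, mul_assoc]
      calc (2 ^ (m + 1) : ℝ≥0∞)⁻¹ * ((ν (B (T m)))⁻¹ * ν (B (T m)))
          ≤ (2 ^ (m + 1) : ℝ≥0∞)⁻¹ * 1 := by
            gcongr
            exact ENNReal.inv_mul_le_one _
        _ = (2 : ℝ≥0∞)⁻¹ ^ (m + 1) := by rw [mul_one, ENNReal.inv_pow]
    calc lam Set.univ ≤ ∑' m, (2 : ℝ≥0∞)⁻¹ ^ (m + 1) := h1 ▸ ENNReal.tsum_le_tsum h2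
      _ ≤ ∑' m, (2 : ℝ≥0∞)⁻¹ ^ m := ENNReal.tsum_le_tsum fun m =>
          pow_le_pow_right_of_le_one' (by simp [ENNReal.inv_le_one]) (Nat.le_succ m)
      _ = (1 - 2⁻¹)⁻¹ := ENNReal.tsum_geometric _
      _ = 2 := by rw [ENNReal.one_sub_inv_two, inv_inv]
  haveI hlamfin : IsFiniteMeasure lam :=
    ⟨lt_of_le_of_lt hlamuniv (by norm_num)⟩
  have hinfC : MeasurableSet[C] {x | h x = ∞} := hhC (measurableSet_singleton ∞)
  have hinfty : ν {x | h x = ∞} = 0 := by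
    by_contra hne
    have hlamS : lam {x | h x = ∞} = ∞ := by
      rw [hlam, withDensity_apply _ (hC _ hinfC)]
      rw [setLIntegral_congr_fun (hC _ hinfC) (fun x hx => hx)]
      rw [setLIntegral_const]
      exact ENNReal.top_mul hne
    exact (measure_lt_top lam _).ne hlamS
  -- trimmed measures and the Radon–Nikodym derivative
  set lam' : @Measure Y C := lam.trim hC with hlam'
  set kap' : @Measure Y C := (lam.restrict A).trim hC with hkap'
  haveI : IsFiniteMeasure lam' := isFiniteMeasure_trim hC
  haveI : IsFiniteMeasure kap' := isFiniteMeasure_trim hC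
  have hle : kap' ≤ lam' := by
    refine Measure.le_iff.2 fun s hs => ?_
    rw [hkap', hlam', trim_measurableSet_eq hC hs, trim_measurableSet_eq hC hs]
    exact Measure.le_iff'.1 Measure.restrict_le_self s
  have hac : kap' ≪ lam' := hle.absolutelyContinuous
  set r : Y → ℝ≥0∞ := @Measure.rnDeriv Y C kap' lam' with hrdef
  have hrC : Measurable[C] r := Measure.measurable_rnDeriv _ _
  have hr1 : r ≤ᵐ[lam'] 1 := Measure.rnDeriv_le_one_of_le hle
  set g' : Y → ℝ≥0∞ := fun x => min (r x) 1 with hg'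
  have hg'C : Measurable[C] g' := hrC.min measurable_const
  have hg'le : ∀ x, g' x ≤ 1 := fun x => min_le_right _ _
  have hwd : lam'.withDensity g' = kap' := by
    have hgr : g' =ᵐ[lam'] r := hr1.mono fun x hx => by rw [hg']; exact min_eq_left hx
    rw [withDensity_congr_ae hgr]
    exact Measure.withDensity_rnDeriv_eq kap' lam' hac
  -- the key identity over ν
  have key : ∀ s' : Set Y, MeasurableSet[C] s' → ν (s' \ U) = 0 →
      ∫⁻ x in s', g' x ∂ν = ν (s' ∩ A) := by
    intro s' hs' hnull
    set ψ : Y → ℝ≥0∞ := s'.indicator fun x => (h x)⁻¹ with hψ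
    have hψC : Measurable[C] ψ := (hhC.inv).indicator hs'
    have hψm : Measurable[mY] ψ := hψC.mono hC le_rfl
    have hae1 : ∀ᵐ x ∂ν, x ∉ s' \ U := measure_eq_zero_iff_ae_notMem.1 hnull
    have hae2 : ∀ᵐ x ∂ν, x ∉ {x | h x = ∞} := measure_eq_zero_iff_ae_notMem.1 hinfty
    have h1 : ∫⁻ x, ψ x ∂kap' = ν (s' ∩ A) := by
      rw [hkap', lintegral_trim hC hψC, hlam, restrict_withDensity hA,
        lintegral_withDensity_eq_lintegral_mul _ hhm hψm]
      have hcong : ∀ᵐ x ∂ν, (h * ψ) x = Set.indicator s' 1 x := by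
        filter_upwards [hae1, hae2] with x hx1 hx2
        by_cases hxs : x ∈ s'
        · have hxU : x ∈ U := by
            by_contra hxU
            exact hx1 ⟨hxs, hxU⟩
          have hne0 : h x ≠ 0 := hhpos x hxU
          have hnetop : h x ≠ ∞ := hx2
          simp only [Pi.mul_apply, hψ, Set.indicator_of_mem hxs, Pi.one_apply]
          exact ENNReal.mul_inv_cancel hne0 hnetop
        · simp only [Pi.mul_apply, hψ, Set.indicator_of_notMem hxs, mul_zero]
      rw [lintegral_congr_ae (ae_restrict_of_ae hcong),
        lintegral_indicator_one (hC _ hs'), Measure.restrict_apply (hC _ hs')]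
    have h2 : ∫⁻ x, ψ x ∂kap' = ∫⁻ x in s', g' x ∂ν := by
      rw [← hwd, lintegral_withDensity_eq_lintegral_mul _ hg'C hψC, hlam',
        lintegral_trim hC (show Measurable[C] (g' * ψ) from hg'C.mul hψC), hlam,
        lintegral_withDensity_eq_lintegral_mul _ hhm
          (show Measurable[mY] (g' * ψ) from (hg'C.mul hψC).mono hC le_rfl)]
      have hcong : ∀ᵐ x ∂ν, (h * (g' * ψ)) x = Set.indicator s' g' x := by
        filter_upwards [hae1, hae2] with x hx1 hx2
        by_cases hxs : x ∈ s'
        · have hxU : x ∈ U := by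
            by_contra hxU
            exact hx1 ⟨hxs, hxU⟩
          have hne0 : h x ≠ 0 := hhpos x hxU
          simp only [Pi.mul_apply, hψ, Set.indicator_of_mem hxs]
          rw [mul_left_comm, ENNReal.mul_inv_cancel hne0 hx2, mul_one]
        · simp only [Pi.mul_apply, hψ, Set.indicator_of_notMem hxs, mul_zero]
      rw [lintegral_congr_ae hcong, lintegral_indicator (hC _ hs')]
    rw [← h2, h1]
  -- conclusion
  refine ⟨fun x => (g' x).toReal, hg'C.ennreal_toReal, ?_⟩
  intro i s hs
  have hs'C : MeasurableSet[C] (s ∩ B i) := hs.inter (hB i)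
  have hnull : ν ((s ∩ B i) \ U) = 0 :=
    measure_mono_null (fun x hx => ⟨hx.1.2, hx.2⟩ : (s ∩ B i) \ U ⊆ B i \ U) (hmax i)
  have hkey := key _ hs'C hnull
  rw [integral_toReal ((hg'C.mono hC le_rfl).aemeasurable)
    (ae_of_all _ fun x => lt_of_le_of_lt (hg'le x) ENNReal.one_lt_top)]
  congr 1
  rw [Measure.restrict_smul, lintegral_smul_measure,
    Measure.restrict_restrict (hC _ hs), hkey,
    Measure.smul_apply, Measure.restrict_apply ((hC _ hs).inter hA), smul_eq_mul,
    Set.inter_right_comm, smul_eq_mul]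
end Aux

/-- **Lemma (sufficiency part).** If `μ` is σ-finite, then the σ-algebra generated on
`Xⁿ` by the products `Eⁿ`, `E ∈ ℰ`, is sufficient for the model of `n`-fold products
of the conditional laws `μ(·|E)`, `E ∈ ℰ`, `0 < μ(E) < ∞`. -/
theorem products_generate_sufficient_for_conditional_laws
    {X : Type*} [mX : MeasurableSpace X] (μ : Measure X) [SigmaFinite μ]
    (ℰ : Set (Set X)) (hℰ : ∀ E ∈ ℰ, MeasurableSet E) (n : ℕ) :
    IsLSSufficient MeasurableSpace.pi
      (MeasurableSpace.generateFrom
        {s : Set (Fin n → X) | ∃ E ∈ ℰ, s = Set.univ.pi fun _ : Fin n => E})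
      {P : Measure (Fin n → X) | ∃ E ∈ ℰ, 0 < μ E ∧ μ E < ⊤ ∧
        P = Measure.pi fun _ : Fin n => condLaw μ E} := by
  classical
  intro A hA
  have hC : MeasurableSpace.generateFrom
      {s : Set (Fin n → X) | ∃ E ∈ ℰ, s = Set.univ.pi fun _ : Fin n => E}
      ≤ (MeasurableSpace.pi : MeasurableSpace (Fin n → X)) := by
    refine MeasurableSpace.generateFrom_le ?_
    rintro s ⟨E, hE, rfl⟩
    exact MeasurableSet.univ_pi fun _ => hℰ E hE
  by_cases hM : ∃ E, E ∈ ℰ ∧ 0 < μ E ∧ μ E < ⊤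
  · haveI : Nonempty {E : Set X // E ∈ ℰ ∧ 0 < μ E ∧ μ E < ⊤} :=
      ⟨⟨hM.choose, hM.choose_spec⟩⟩
    obtain ⟨g, hg, hgP⟩ := abstract_sufficiency (Measure.pi fun _ : Fin n => μ) hC
      (ι := {E : Set X // E ∈ ℰ ∧ 0 < μ E ∧ μ E < ⊤})
      (fun E => Set.univ.pi fun _ : Fin n => E.1)
      (fun E => MeasurableSpace.measurableSet_generateFrom ⟨E.1, E.2.1, rfl⟩)
      (fun E => by
        rw [pi_box μ n (hℰ _ E.2.1)]
        exact pow_ne_zero n E.2.2.1.ne')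
      (fun E => by
        rw [pi_box μ n (hℰ _ E.2.1)]
        exact ENNReal.pow_ne_top E.2.2.2.ne)
      hA
    refine ⟨g, hg, ?_⟩
    rintro P ⟨E, hEℰ, hE0, hEt, rfl⟩ s hs
    have hbox : (Measure.pi fun _ : Fin n => μ) (Set.univ.pi fun _ : Fin n => E) = μ E ^ n :=
      pi_box μ n (hℰ E hEℰ)
    have hP := condLaw_pi_eq μ n (hℰ E hEℰ) hE0.ne' hEt.ne
    have hgP' := hgP ⟨E, hEℰ, hE0, hEt⟩ s hs
    rw [hbox] at hgP'
    rw [hP]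
    exact hgP'
  · refine ⟨fun _ => 0, @measurable_const ℝ _ _ _ 0, ?_⟩
    rintro P ⟨E, hEℰ, hE0, hEt, rfl⟩
    exact absurd ⟨E, hEℰ, hE0, hEt⟩ hM
end

section
/- Let μ be a measure on a measurable subspace X of the extended real line, n ∈ ℕ, and consider the coordinate projections X₁,…,X_n on Xⁿ. Then min_{i=1}^n X_i is complete and sufficient for the model {μ(·|J)^{⊗n} : J an upray in X with 0 < μ(J) < ∞}. -/
open MeasureTheory

open Set
open scoped ENNReal



namespace MinCS

variable {S : Set EReal}

lemma upray_chain {J K : Set S} (hJ : ∀ x ∈ J, ∀ y : S, x ≤ y → y ∈ J)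
    (hK : ∀ x ∈ K, ∀ y : S, x ≤ y → y ∈ K) : J ⊆ K ∨ K ⊆ J := by
  by_cases h : J ⊆ K
  · exact Or.inl h
  · right
    obtain ⟨x, hxJ, hxK⟩ := not_subset.mp h
    intro y hyK
    rcases le_total x y with hxy | hyx
    · exact hJ x hxJ y hxy
    · exact absurd (hK y hyK x hyx) hxK

def hat (J : Set S) : Set EReal := {t | ∀ s : S, t ≤ (s : EReal) → s ∈ J}

lemma hat_mono {J : Set S} {u v : EReal} (hu : u ∈ hat J) (huv : u ≤ v) : v ∈ hat J :=
  fun s hs => hu s (huv.trans hs)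

lemma coe_preimage_hat {J : Set S} (hJ : ∀ x ∈ J, ∀ y : S, x ≤ y → y ∈ J) :
    Subtype.val ⁻¹' hat J = J := by
  ext s
  constructor
  · exact fun hs => hs s le_rfl
  · intro hs t hst
    exact hJ s hs t (by exact_mod_cast hst)

lemma measurableSet_hat (J : Set S) : MeasurableSet (hat J) := by
  by_cases hne : (hat J).Nonempty
  · set a := sInf (hat J) with ha
    by_cases haJ : a ∈ hat J
    · have : hat J = Ici a := by
        ext t
        exact ⟨fun ht => sInf_le ht, fun ht => hat_mono haJ ht⟩
      rw [this]; exact measurableSet_Ici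
    · have : hat J = Ioi a := by
        ext t
        constructor
        · intro ht
          rcases lt_or_eq_of_le (sInf_le ht : a ≤ t) with h | h
          · exact h
          · exact absurd (show a ∈ hat J by rw [ha, h]; exact ht) haJ
        · intro ht
          obtain ⟨u, hu, hut⟩ := sInf_lt_iff.mp (show sInf (hat J) < t from ht)
          exact hat_mono hu hut.le
      rw [this]; exact measurableSet_Ioi
  · rw [not_nonempty_iff_eq_empty.mp hne]; exact MeasurableSet.empty

lemma measurableSet_upray {J : Set S} (hJ : ∀ x ∈ J, ∀ y : S, x ≤ y → y ∈ J) :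
    MeasurableSet J := by
  rw [← coe_preimage_hat hJ]
  exact measurable_subtype_coe (measurableSet_hat J)

variable {n : ℕ}

noncomputable def mmin (n : ℕ) (S : Set EReal) : (Fin n → S) → EReal :=
  fun x => ⨅ i, (x i : EReal)

lemma measurable_mmin : Measurable (mmin n S) :=
  Measurable.iInf fun i => (measurable_pi_apply i).subtype_val

lemma preimage_mmin_hat (hn : 0 < n) {J : Set S} (hJ : ∀ x ∈ J, ∀ y : S, x ≤ y → y ∈ J) :
    mmin n S ⁻¹' hat J = Set.pi univ fun _ => J := by
  haveI : Nonempty (Fin n) := ⟨⟨0, hn⟩⟩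
  ext x
  constructor
  · intro hx i _
    exact hx (x i) (iInf_le _ i)
  · intro hx s hs
    obtain ⟨i, hi⟩ := exists_eq_ciInf_of_finite (f := fun i => ((x i : EReal)))
    have : (x i : EReal) ≤ (s : EReal) := hi.symm ▸ hs
    exact hJ (x i) (hx i trivial) s (by exact_mod_cast this)

lemma preimage_mmin_Ici (hn : 0 < n) (a : EReal) :
    mmin n S ⁻¹' Ici a = Set.pi univ fun _ => (Subtype.val ⁻¹' Ici a : Set S) := by
  ext x
  simp only [mmin, mem_preimage, mem_Ici, le_iInf_iff, mem_univ_pi, mem_preimage]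



lemma condLaw_prob {X : Type*} [MeasurableSpace X] (μ : Measure X) {J : Set X}
    (h0 : μ J ≠ 0) (ht : μ J ≠ ⊤) : IsProbabilityMeasure (condLaw μ J) := by
  constructor
  rw [condLaw, Measure.smul_apply, Measure.restrict_apply_univ, smul_eq_mul,
    ENNReal.inv_mul_cancel h0 ht]

lemma condLaw_smul_restrict {X : Type*} [MeasurableSpace X] (μ : Measure X) {K J : Set X}
    (hKJ : K ⊆ J) (hK : MeasurableSet K) (h0 : μ J ≠ 0) (ht : μ J ≠ ⊤) :
    condLaw μ K = (μ J * (μ K)⁻¹) • (condLaw μ J).restrict K := by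
  rw [condLaw, condLaw, Measure.restrict_smul, Measure.restrict_restrict hK,
    inter_eq_self_of_subset_left hKJ, smul_smul, mul_comm (μ J), mul_assoc,
    ENNReal.mul_inv_cancel h0 ht, mul_one]

lemma pi_restrict_box {X : Type*} [MeasurableSpace X] (Q : Measure X) [IsFiniteMeasure Q]
    {K : Set X} (hK : MeasurableSet K) (n : ℕ) :
    Measure.pi (fun _ : Fin n => Q.restrict K)
      = (Measure.pi fun _ : Fin n => Q).restrict (Set.pi univ fun _ => K) := by
  refine Measure.pi_eq fun s hs => ?_
  rw [Measure.restrict_apply (MeasurableSet.univ_pi hs), ← pi_inter_distrib, Measure.pi_pi]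
  simp_rw [Measure.restrict_apply (hs _)]

lemma pi_smul {X : Type*} [MeasurableSpace X] (Q : Measure X) [IsFiniteMeasure Q]
    {c : ENNReal} (hc : c ≠ ⊤) (n : ℕ) :
    Measure.pi (fun _ : Fin n => c • Q) = c ^ n • Measure.pi (fun _ : Fin n => Q) := by
  haveI : IsFiniteMeasure (c • Q) :=
    ⟨by rw [Measure.smul_apply, smul_eq_mul]; exact ENNReal.mul_lt_top hc.lt_top (measure_lt_top Q univ)⟩
  refine Measure.pi_eq fun s hs => ?_
  simp only [Measure.smul_apply, smul_eq_mul, Measure.pi_pi, Finset.prod_mul_distrib,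
    Finset.prod_const, Finset.card_univ, Fintype.card_fin]

variable {S : Set EReal} (μ : Measure S) {n : ℕ}

lemma pi_condLaw_eq {K J : Set S} (hKJ : K ⊆ J) (hK : MeasurableSet K)
    (hJ0 : μ J ≠ 0) (hJt : μ J ≠ ⊤) (hK0 : μ K ≠ 0) :
    (Measure.pi fun _ : Fin n => condLaw μ K)
      = (μ J * (μ K)⁻¹) ^ n •
        (Measure.pi fun _ : Fin n => condLaw μ J).restrict (Set.pi univ fun _ => K) := by
  haveI := condLaw_prob μ hJ0 hJt
  have hct : μ J * (μ K)⁻¹ ≠ ⊤ :=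
    ENNReal.mul_ne_top hJt (by simp [hK0])
  rw [condLaw_smul_restrict μ hKJ hK hJ0 hJt, pi_smul _ hct, pi_restrict_box _ hK]

lemma pi_condLaw_box_null {K J : Set S} (hKJ : K ⊆ J) (hK : MeasurableSet K)
    (hJ0 : μ J ≠ 0) (hJt : μ J ≠ ⊤) (hK0 : μ K = 0) (hn : 0 < n) :
    (Measure.pi fun _ : Fin n => condLaw μ J) (Set.pi univ fun _ => K) = 0 := by
  haveI := condLaw_prob μ hJ0 hJt
  rw [Measure.pi_pi]
  have : condLaw μ J K = 0 := by
    rw [condLaw, Measure.smul_apply, Measure.restrict_apply hK, smul_eq_mul]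
    have : μ (K ∩ J) = 0 := le_antisymm (le_trans (measure_mono inter_subset_left) hK0.le) zero_le
    rw [this, mul_zero]
  rw [Finset.prod_const, this, Finset.card_univ, Fintype.card_fin]
  exact zero_pow hn.ne'

lemma pi_condLaw_compl_box_null {K J : Set S} (hJK : μ (J \ K) = 0) (hK : MeasurableSet K)
    (hJ0 : μ J ≠ 0) (hJt : μ J ≠ ⊤) :
    (Measure.pi fun _ : Fin n => condLaw μ J) ((Set.pi univ fun _ => K)ᶜ) = 0 := by
  haveI := condLaw_prob μ hJ0 hJt
  have hsub : (Set.pi univ fun _ : Fin n => K)ᶜ ⊆ ⋃ i, Function.eval i ⁻¹' Kᶜ := by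
    intro x hx
    simp only [mem_compl_iff, mem_univ_pi, not_forall] at hx
    obtain ⟨i, hi⟩ := hx
    exact mem_iUnion.mpr ⟨i, hi⟩
  refine measure_mono_null hsub (measure_iUnion_null fun i => ?_)
  refine Measure.pi_eval_preimage_null (μ := fun _ : Fin n => condLaw μ J) ?_
  rw [condLaw, Measure.smul_apply, Measure.restrict_apply hK.compl, smul_eq_mul]
  have : Kᶜ ∩ J = J \ K := by rw [diff_eq, inter_comm]
  rw [this, hJK, mul_zero]


section Complete

variable {S : Set EReal} {μ : Measure S} {n : ℕ}

/-- The model. -/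
def model (μ : Measure S) (n : ℕ) : Set (Measure (Fin n → S)) :=
  {P : Measure (Fin n → S) | ∃ J : Set S,
    (∀ x ∈ J, ∀ y : S, x ≤ y → y ∈ J) ∧ 0 < μ J ∧ μ J < ⊤ ∧
    P = Measure.pi fun _ : Fin n => condLaw μ J}

lemma upray_Ici (a : EReal) : ∀ x ∈ (Subtype.val ⁻¹' Ici a : Set S), ∀ y : S,
    x ≤ y → y ∈ (Subtype.val ⁻¹' Ici a : Set S) := by
  intro x hx y hxy
  have hx' : a ≤ (x : EReal) := hx
  have : (x : EReal) ≤ (y : EReal) := by exact_mod_cast hxy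
  exact le_trans hx' this

lemma key_integral_Ici (hn : 0 < n) {h : (Fin n → S) → ℝ}
    (hint : ∀ P ∈ model μ n, Integrable h P)
    (hzero : ∀ P ∈ model μ n, ∫ x, h x ∂P = 0)
    {J : Set S} (hup : ∀ x ∈ J, ∀ y : S, x ≤ y → y ∈ J) (hJ0 : 0 < μ J) (hJt : μ J < ⊤)
    (a : EReal) :
    ∫ x in mmin n S ⁻¹' Ici a, h x ∂(Measure.pi fun _ : Fin n => condLaw μ J) = 0 := by
  set K : Set S := Subtype.val ⁻¹' Ici a with hKdef
  have hKmeas : MeasurableSet K := measurable_subtype_coe measurableSet_Ici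
  have hPJ : (Measure.pi fun _ : Fin n => condLaw μ J) ∈ model μ n :=
    ⟨J, hup, hJ0, hJt, rfl⟩
  rw [preimage_mmin_Ici hn a]
  by_cases hc : ∀ s ∈ J, a ≤ (s : EReal)
  · have hJK : J ⊆ K := fun s hs => hc s hs
    have h0 : (Measure.pi fun _ : Fin n => condLaw μ J) ((Set.pi univ fun _ : Fin n => K)ᶜ) = 0 :=
      pi_condLaw_compl_box_null μ (by rw [diff_eq_empty.mpr hJK]; exact measure_empty) hKmeas hJ0.ne' hJt.ne
    have hres : (Measure.pi fun _ : Fin n => condLaw μ J).restrict (Set.pi univ fun _ : Fin n => K)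
        = Measure.pi fun _ : Fin n => condLaw μ J := by
      rw [Measure.restrict_congr_set (ae_eq_univ.mpr h0), Measure.restrict_univ]
    show ∫ x, h x ∂((Measure.pi fun _ : Fin n => condLaw μ J).restrict
      (Set.pi univ fun _ : Fin n => K)) = 0
    rw [hres]
    exact hzero _ hPJ
  · push_neg at hc
    obtain ⟨x0, hx0J, hx0⟩ := hc
    have hx0lt : (x0 : EReal) < a := hx0
    have hKJ : K ⊆ J := by
      intro y hy
      have : (x0 : EReal) ≤ (y : EReal) := le_of_lt (lt_of_lt_of_le hx0lt hy)
      exact hup x0 hx0J y (by exact_mod_cast this)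
    by_cases hK0 : μ K = 0
    · have hnull := pi_condLaw_box_null μ hKJ hKmeas hJ0.ne' hJt.ne hK0 hn
      rw [show (Measure.pi fun _ : Fin n => condLaw μ J).restrict (Set.pi univ fun _ : Fin n => K)
          = 0 from Measure.restrict_eq_zero.mpr hnull]
      exact integral_zero_measure _
    · have hKt : μ K < ⊤ := lt_of_le_of_lt (measure_mono hKJ) hJt
      have hPK : (Measure.pi fun _ : Fin n => condLaw μ K) ∈ model μ n :=
        ⟨K, upray_Ici a, pos_iff_ne_zero.mpr hK0, hKt, rfl⟩
      have h1 : ∫ x, h x ∂(Measure.pi fun _ : Fin n => condLaw μ K) = 0 := hzero _ hPK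
      rw [pi_condLaw_eq μ hKJ hKmeas hJ0.ne' hJt.ne hK0, integral_smul_measure] at h1
      have hc0 : μ J * (μ K)⁻¹ ≠ 0 := by
        simp [hJ0.ne', ENNReal.inv_ne_zero, hKt.ne]
      have hct : μ J * (μ K)⁻¹ ≠ ⊤ := ENNReal.mul_ne_top hJt.ne (by simp [hK0])
      have htr : (((μ J * (μ K)⁻¹) ^ n).toReal) ≠ 0 := by
        rw [ENNReal.toReal_ne_zero]
        exact ⟨pow_ne_zero n hc0, ENNReal.pow_ne_top hct⟩
      rcases smul_eq_zero.mp h1 with hbad | hgood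
      · exact absurd hbad htr
      · exact hgood


lemma complete_part (hn : 0 < n) :
    IsLSComplete MeasurableSpace.pi
      (MeasurableSpace.comap (mmin n S) inferInstance) (model μ n) := by
  intro h hmeas hint hzero P hP
  obtain ⟨J, hup, hJ0, hJt, rfl⟩ := hP
  haveI hprob : IsProbabilityMeasure (condLaw μ J) := condLaw_prob μ hJ0.ne' hJt.ne
  set Pm : Measure (Fin n → S) := Measure.pi fun _ : Fin n => condLaw μ J with hPm
  have hle : MeasurableSpace.comap (mmin n S) (inferInstance : MeasurableSpace EReal)
      ≤ (MeasurableSpace.pi : MeasurableSpace (Fin n → S)) :=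
    (measurable_mmin (n := n) (S := S)).comap_le
  have hma : Measurable h := hmeas.mono hle le_rfl
  have hInt : Integrable h Pm := hint _ ⟨J, hup, hJ0, hJt, rfl⟩
  have hIzero : ∫ x, h x ∂Pm = 0 := hzero _ ⟨J, hup, hJ0, hJt, rfl⟩
  set fp : (Fin n → S) → ℝ≥0∞ := fun x => ENNReal.ofReal (h x) with hfpdef
  set fq : (Fin n → S) → ℝ≥0∞ := fun x => ENNReal.ofReal (-h x) with hfqdef
  have hfp : Measurable fp := hma.ennreal_ofReal
  have hfq : Measurable fq := hma.neg.ennreal_ofReal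
  have hbound : ∀ (g : (Fin n → S) → ℝ≥0∞), (∀ x, g x ≤ (‖h x‖₊ : ℝ≥0∞)) →
      ∫⁻ x, g x ∂Pm ≠ ⊤ := by
    intro g hg
    exact ne_of_lt (lt_of_le_of_lt (lintegral_mono hg) hInt.2)
  have hfp_fin : ∫⁻ x, fp x ∂Pm ≠ ⊤ := by
    refine hbound _ fun x => ?_
    rw [← enorm_eq_nnnorm, Real.enorm_eq_ofReal_abs]
    exact ENNReal.ofReal_le_ofReal (le_abs_self _)
  have hfq_fin : ∫⁻ x, fq x ∂Pm ≠ ⊤ := by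
    refine hbound _ fun x => ?_
    rw [← enorm_eq_nnnorm, Real.enorm_eq_ofReal_abs]
    exact ENNReal.ofReal_le_ofReal (neg_le_abs _)
  set Pb := Pm.withDensity fp with hPb
  set Pq := Pm.withDensity fq with hPq
  haveI : IsFiniteMeasure Pb :=
    ⟨by rw [hPb, withDensity_apply _ MeasurableSet.univ, Measure.restrict_univ]
        exact hfp_fin.lt_top⟩
  haveI : IsFiniteMeasure Pq :=
    ⟨by rw [hPq, withDensity_apply _ MeasurableSet.univ, Measure.restrict_univ]
        exact hfq_fin.lt_top⟩
  have hIeq : ∀ s : Set (Fin n → S), MeasurableSet s →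
      ∫ x in s, h x ∂Pm = (Pb s).toReal - (Pq s).toReal := by
    intro s hs
    rw [hPb, hPq, withDensity_apply _ hs, withDensity_apply _ hs]
    exact integral_eq_lintegral_pos_part_sub_lintegral_neg_part hInt.integrableOn
  have hzero_of : ∀ s : Set (Fin n → S), MeasurableSet s →
      (∫ x in s, h x ∂Pm = 0) → Pb s = Pq s := by
    intro s hs h0
    rw [hIeq s hs] at h0
    have := sub_eq_zero.mp h0
    exact (ENNReal.toReal_eq_toReal_iff' (measure_ne_top _ _) (measure_ne_top _ _)).mp this
  set G : Set (Set (Fin n → S)) := (preimage (mmin n S)) '' (range Ici) with hG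
  have hB : (inferInstance : MeasurableSpace EReal)
      = MeasurableSpace.generateFrom (range Ici) := by
    rw [BorelSpace.measurable_eq (α := EReal), borel_eq_generateFrom_Ici]
  have hCgen : MeasurableSpace.comap (mmin n S) (inferInstance : MeasurableSpace EReal)
      = MeasurableSpace.generateFrom G := by
    rw [hB, MeasurableSpace.comap_generateFrom, hG]
  have hπ : IsPiSystem G := by
    rintro _ ⟨_, ⟨a, rfl⟩, rfl⟩ _ ⟨_, ⟨b, rfl⟩, rfl⟩ -
    exact ⟨Ici (a ⊔ b), mem_range_self _, by rw [← preimage_inter, Ici_inter_Ici]⟩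
  set κb := Pb.trim hle with hκb
  set κq := Pq.trim hle with hκq
  haveI : IsFiniteMeasure κb :=
    ⟨by rw [hκb, trim_measurableSet_eq hle MeasurableSet.univ]; exact measure_lt_top _ _⟩
  have hGzero : ∀ s ∈ G, κb s = κq s := by
    rintro _ ⟨_, ⟨a, rfl⟩, rfl⟩
    have hsC : MeasurableSet[MeasurableSpace.comap (mmin n S) inferInstance]
        (mmin n S ⁻¹' Ici a) := ⟨Ici a, measurableSet_Ici, rfl⟩
    have hs : MeasurableSet (mmin n S ⁻¹' Ici a) := hle _ hsC
    rw [hκb, hκq, trim_measurableSet_eq hle hsC, trim_measurableSet_eq hle hsC]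
    exact hzero_of _ hs (key_integral_Ici hn hint hzero hup hJ0 hJt a)
  have huniv : κb univ = κq univ := by
    rw [hκb, hκq, trim_measurableSet_eq hle MeasurableSet.univ,
      trim_measurableSet_eq hle MeasurableSet.univ]
    refine hzero_of _ MeasurableSet.univ ?_
    rw [setIntegral_univ]
    exact hIzero
  have hκ : κb = κq := ext_of_generate_finite G hCgen hπ hGzero huniv
  have hallC : ∀ s : Set (Fin n → S),
      MeasurableSet[MeasurableSpace.comap (mmin n S) inferInstance] s →
      ∫ x in s, h x ∂Pm = 0 := by
    intro s hsC
    have hs := hle _ hsC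
    have hPbq : Pb s = Pq s := by
      have : κb s = κq s := by rw [hκ]
      rwa [hκb, hκq, trim_measurableSet_eq hle hsC, trim_measurableSet_eq hle hsC] at this
    rw [hIeq s hs, hPbq, sub_self]
  haveI : IsFiniteMeasure (Pm.trim hle) :=
    ⟨by rw [trim_measurableSet_eq hle MeasurableSet.univ]; exact measure_lt_top _ _⟩
  refine ae_eq_zero_of_forall_setIntegral_eq_of_finStronglyMeasurable_trim hle
    (fun s _ _ => hInt.integrableOn) (fun s hs _ => hallC s hs) ?_
  exact (Measurable.stronglyMeasurable hmeas).finStronglyMeasurable _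

end Complete

section Suff

variable {S : Set EReal} (μ : Measure S)

/-- The index family of the model. -/
def UU : Set (Set S) :=
  {J : Set S | (∀ x ∈ J, ∀ y : S, x ≤ y → y ∈ J) ∧ 0 < μ J ∧ μ J < ⊤}

variable {μ}

lemma exists_mono_seq (hne : (UU μ).Nonempty) :
    ∃ K : ℕ → Set S, (∀ k, K k ∈ UU μ) ∧ (∀ k, K k ⊆ K (k + 1)) ∧
      ∀ J ∈ UU μ, μ (J \ ⋃ k, K k) = 0 := by
  classical
  obtain ⟨J0, hJ0⟩ := hne
  set s : ℝ≥0∞ := ⨆ (J : Set S) (_ : J ∈ UU μ), μ J with hs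
  have hle_s : ∀ J ∈ UU μ, μ J ≤ s := fun J hJ => le_iSup₂ (f := fun J (_ : J ∈ UU μ) => μ J) J hJ
  have hs0 : s ≠ 0 := by
    intro h0
    have := hle_s J0 hJ0
    rw [h0, le_zero_iff] at this
    exact hJ0.2.1.ne' this
  -- choose an approximating sequence
  have hex : ∃ Jseq : ℕ → Set S, (∀ k, Jseq k ∈ UU μ) ∧ s ≤ ⨆ k, μ (Jseq k) := by
    by_cases hst : s = ⊤
    · have hchoice : ∀ k : ℕ, ∃ J ∈ UU μ, (k : ℝ≥0∞) < μ J := by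
        intro k
        have hk : (k : ℝ≥0∞) < s := hst ▸ ENNReal.natCast_lt_top k
        rw [hs, lt_iSup_iff] at hk
        obtain ⟨J, hJ⟩ := hk
        rw [lt_iSup_iff] at hJ
        obtain ⟨hJU, hk⟩ := hJ
        exact ⟨J, hJU, hk⟩
      choose Jseq hJU hJlt using hchoice
      refine ⟨Jseq, hJU, ?_⟩
      rw [hst]
      have : ⊤ ≤ ⨆ k : ℕ, (k : ℝ≥0∞) := by
        rw [ENNReal.iSup_natCast]
      exact this.trans (iSup_mono fun k => (hJlt k).le)
    · have hchoice : ∀ k : ℕ, ∃ J ∈ UU μ, s - (k : ℝ≥0∞)⁻¹ < μ J := by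
        intro k
        have hk : s - (k : ℝ≥0∞)⁻¹ < s := by
          rcases Nat.eq_zero_or_pos k with rfl | hkpos
          · simp only [Nat.cast_zero, ENNReal.inv_zero, ENNReal.sub_top]
            exact pos_iff_ne_zero.mpr hs0
          · refine ENNReal.sub_lt_self hst hs0 ?_
            simp [ENNReal.inv_ne_zero]
        rw [hs, lt_iSup_iff] at hk
        obtain ⟨J, hJ⟩ := hk
        rw [lt_iSup_iff] at hJ
        obtain ⟨hJU, hk⟩ := hJ
        exact ⟨J, hJU, hk⟩
      choose Jseq hJU hJlt using hchoice
      refine ⟨Jseq, hJU, ?_⟩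
      by_contra hlt
      push_neg at hlt
      set t : ℝ≥0∞ := ⨆ k, μ (Jseq k) with ht
      have htt : t ≠ ⊤ := (hlt.trans_le le_top).ne
      obtain ⟨m, hm⟩ := ENNReal.exists_inv_nat_lt (pos_iff_ne_zero.mp (tsub_pos_of_lt hlt))
      have hmne : ((m : ℝ≥0∞))⁻¹ ≠ ⊤ := (hm.trans_le le_top).ne
      have h1 : s - (m : ℝ≥0∞)⁻¹ < t := lt_of_lt_of_le (hJlt m) (le_iSup (fun k => μ (Jseq k)) m)
      have h2 : s < t + (m : ℝ≥0∞)⁻¹ := by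
        rw [← ENNReal.sub_lt_iff_lt_right hmne ((hm.le.trans tsub_le_self))] at *
        exact h1
      have h3 : t + (m : ℝ≥0∞)⁻¹ < s := by
        calc t + (m : ℝ≥0∞)⁻¹ < t + (s - t) := by
              exact ENNReal.add_lt_add_left htt hm
          _ = s := add_tsub_cancel_of_le hlt.le
      exact lt_asymm h2 h3
  obtain ⟨Jseq, hJU, hS⟩ := hex
  -- monotonize
  set K : ℕ → Set S := fun k =>
    Nat.rec (Jseq 0) (fun k Kk => if Jseq (k + 1) ⊆ Kk then Kk else Jseq (k + 1)) k with hK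
  have hKmem : ∀ k, K k ∈ UU μ := by
    intro k
    induction k with
    | zero => exact hJU 0
    | succ k ih =>
      show (if Jseq (k + 1) ⊆ K k then K k else Jseq (k + 1)) ∈ UU μ
      split
      · exact ih
      · exact hJU (k + 1)
  have hKstep : ∀ k, K k ⊆ K (k + 1) := by
    intro k
    show K k ⊆ (if Jseq (k + 1) ⊆ K k then K k else Jseq (k + 1))
    split_ifs with h
    · exact subset_rfl
    · rcases upray_chain (hJU (k + 1)).1 (hKmem k).1 with h' | h'
      · exact absurd h' h
      · exact h'
  have hKge : ∀ k, Jseq k ⊆ K k := by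
    intro k
    induction k with
    | zero => exact subset_rfl
    | succ k ih =>
      show Jseq (k + 1) ⊆ (if Jseq (k + 1) ⊆ K k then K k else Jseq (k + 1))
      split_ifs with h
      · exact h
      · exact subset_rfl
  refine ⟨K, hKmem, hKstep, ?_⟩
  intro J hJ
  by_cases hcase : ∃ k, J ⊆ K k
  · obtain ⟨k, hk⟩ := hcase
    refine measure_mono_null (fun x hx => ?_) (measure_empty (μ := μ))
    exact absurd (hk hx.1) (fun hmem => hx.2 (mem_iUnion.mpr ⟨k, hmem⟩))
  · push_neg at hcase
    have hKJ : ∀ k, K k ⊆ J := by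
      intro k
      rcases upray_chain hJ.1 (hKmem k).1 with h' | h'
      · exact absurd h' (hcase k)
      · exact h'
    have hKmono : Monotone K := monotone_nat_of_le_succ hKstep
    have hUmeas : MeasurableSet (⋃ k, K k) :=
      MeasurableSet.iUnion fun k => measurableSet_upray (hKmem k).1
    have hUsub : (⋃ k, K k) ⊆ J := iUnion_subset hKJ
    have hUfin : μ (⋃ k, K k) ≠ ⊤ := ((measure_mono hUsub).trans_lt hJ.2.2).ne
    rw [measure_diff hUsub hUmeas.nullMeasurableSet hUfin]
    have hU : μ J ≤ μ (⋃ k, K k) := by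
      have h1 : μ (⋃ k, K k) = ⨆ k, μ (K k) :=
        Directed.measure_iUnion (hKmono.directed_le)
      have h2 : (⨆ k, μ (Jseq k)) ≤ ⨆ k, μ (K k) :=
        iSup_mono fun k => measure_mono (hKge k)
      rw [h1]
      exact (hle_s J hJ).trans (hS.trans h2)
    exact tsub_eq_zero_of_le hU


variable {n : ℕ}

lemma nu_eq (hn : 0 < n) {K J : Set S} (hK : K ∈ UU μ) (hJ : J ∈ UU μ) (hKJ : K ⊆ J) :
    Measure.map (mmin n S) (Measure.pi fun _ : Fin n => condLaw μ K)
      = (μ J * (μ K)⁻¹) ^ n •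
        (Measure.map (mmin n S) (Measure.pi fun _ : Fin n => condLaw μ J)).restrict (hat K) := by
  rw [pi_condLaw_eq μ hKJ (measurableSet_upray hK.1) hJ.2.1.ne' hJ.2.2.ne hK.2.1.ne',
    Measure.map_smul, Measure.restrict_map measurable_mmin (measurableSet_hat K),
    preimage_mmin_hat hn hK.1]

lemma rho_eq (hn : 0 < n) {A : Set (Fin n → S)} (hA : MeasurableSet A)
    {K J : Set S} (hK : K ∈ UU μ) (hJ : J ∈ UU μ) (hKJ : K ⊆ J) :
    Measure.map (mmin n S) ((Measure.pi fun _ : Fin n => condLaw μ K).restrict A)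
      = (μ J * (μ K)⁻¹) ^ n •
        (Measure.map (mmin n S)
          ((Measure.pi fun _ : Fin n => condLaw μ J).restrict A)).restrict (hat K) := by
  rw [pi_condLaw_eq μ hKJ (measurableSet_upray hK.1) hJ.2.1.ne' hJ.2.2.ne hK.2.1.ne',
    Measure.restrict_smul, Measure.restrict_comm hA, Measure.map_smul,
    Measure.restrict_map measurable_mmin (measurableSet_hat K),
    preimage_mmin_hat hn hK.1]

lemma smul_cancel_measure {X : Type*} [MeasurableSpace X] {c : ℝ≥0∞} (hc0 : c ≠ 0)
    (hct : c ≠ ⊤) {ν₁ ν₂ : Measure X} (h : ν₁ = c • ν₂) : ν₂ = c⁻¹ • ν₁ := by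
  rw [h, smul_smul, ENNReal.inv_mul_cancel hc0 hct, one_smul]

lemma cpow_ne_zero {J K : Set S} (hJ : J ∈ UU μ) (hK : K ∈ UU μ) (hKJ : K ⊆ J) :
    (μ J * (μ K)⁻¹) ^ n ≠ 0 ∧ (μ J * (μ K)⁻¹) ^ n ≠ ⊤ := by
  have hKt : μ K ≠ ⊤ := ((measure_mono hKJ).trans_lt hJ.2.2).ne
  constructor
  · exact pow_ne_zero n (by simp [hJ.2.1.ne', ENNReal.inv_ne_zero, hKt])
  · exact ENNReal.pow_ne_top (ENNReal.mul_ne_top hJ.2.2.ne (by simp [hK.2.1.ne']))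


lemma suff_part (hn : 0 < n) :
    IsLSSufficient MeasurableSpace.pi
      (MeasurableSpace.comap (mmin n S) inferInstance) (model μ n) := by
  classical
  intro A hA
  by_cases hne : (UU μ).Nonempty
  swap
  · refine ⟨fun _ => 0, measurable_const, ?_⟩
    intro P hP
    obtain ⟨J, h1, h2, h3, _⟩ := hP
    exact absurd ⟨J, h1, h2, h3⟩ hne
  obtain ⟨K, hKmem, hKstep, hKnull⟩ := exists_mono_seq hne
  have hKmono : Monotone K := monotone_nat_of_le_succ hKstep
  have hKmeas : ∀ k, MeasurableSet (K k) := fun k => measurableSet_upray (hKmem k).1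
  have hm : Measurable (mmin n S) := measurable_mmin
  set T : ℕ → Set EReal := fun k => hat (K k) with hTdef
  have hTmeas : ∀ k, MeasurableSet (T k) := fun k => measurableSet_hat _
  have hTpre : ∀ k, mmin n S ⁻¹' T k = Set.pi univ fun _ : Fin n => K k :=
    fun k => preimage_mmin_hat hn (hKmem k).1
  set ν : ℕ → Measure EReal := fun k =>
    Measure.map (mmin n S) (Measure.pi fun _ : Fin n => condLaw μ (K k)) with hνdef
  set ρ : ℕ → Measure EReal := fun k =>
    Measure.map (mmin n S) ((Measure.pi fun _ : Fin n => condLaw μ (K k)).restrict A) with hρdef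
  have hνprob : ∀ k, IsProbabilityMeasure (ν k) := by
    intro k
    haveI := condLaw_prob μ (hKmem k).2.1.ne' (hKmem k).2.2.ne
    exact Measure.isProbabilityMeasure_map hm.aemeasurable
  have hρle : ∀ k, ρ k ≤ ν k :=
    fun k => Measure.map_mono Measure.restrict_le_self hm
  set c : ℕ → ℝ≥0∞ := fun k => ((2 : ℝ≥0∞)⁻¹) ^ (k + 1) with hcdef
  have hc0 : ∀ k, c k ≠ 0 := fun k => pow_ne_zero _ (by simp)
  have hct : ∀ k, c k ≠ ⊤ := fun k => ENNReal.pow_ne_top (by simp)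
  set lam : Measure EReal := Measure.sum (fun k => c k • ν k) with hlam
  set rh : Measure EReal := Measure.sum (fun k => c k • ρ k) with hrh
  haveI hlamfin : IsFiniteMeasure lam := by
    constructor
    rw [hlam, Measure.sum_apply _ MeasurableSet.univ]
    have hν1 : ∀ k, (c k • ν k) univ = c k := by
      intro k
      haveI := hνprob k
      simp [Measure.smul_apply, measure_univ]
    simp_rw [hν1]
    have hgeo : ∑' k : ℕ, c k ≤ ∑' k : ℕ, ((2 : ℝ≥0∞)⁻¹) ^ k := by
      refine ENNReal.tsum_le_tsum fun k => ?_
      show ((2 : ℝ≥0∞)⁻¹) ^ (k + 1) ≤ ((2 : ℝ≥0∞)⁻¹) ^ k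
      rw [pow_succ]
      exact mul_le_of_le_one_right' (by simp [ENNReal.inv_le_one])
    refine lt_of_le_of_lt hgeo ?_
    rw [ENNReal.tsum_geometric]
    simp [ENNReal.sub_half]
  have hrhlam : rh ≤ lam := by
    rw [hrh, hlam]
    refine Measure.le_iff.mpr fun s hs => ?_
    rw [Measure.sum_apply _ hs, Measure.sum_apply _ hs]
    refine ENNReal.tsum_le_tsum fun k => ?_
    simp only [Measure.smul_apply, smul_eq_mul]
    exact mul_le_mul_right (Measure.le_iff'.mp (hρle k) s) _
  haveI hrhfin : IsFiniteMeasure rh :=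
    ⟨lt_of_le_of_lt (Measure.le_iff'.mp hrhlam univ) (measure_lt_top lam univ)⟩
  have hac : rh ≪ lam := Measure.absolutelyContinuous_of_le hrhlam
  set W : EReal → ℝ≥0∞ := rh.rnDeriv lam with hWdef
  have hWmeas : Measurable W := Measure.measurable_rnDeriv _ _
  have hνac : ∀ k, ν k ≪ lam := by
    intro k
    refine Measure.AbsolutelyContinuous.mk fun s hs hs0 => ?_
    have h1 : (c k • ν k) s ≤ lam s := Measure.le_iff'.mp (Measure.le_sum _ k) s
    rw [hs0] at h1
    have h2 : c k * ν k s = 0 := le_antisymm h1 zero_le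
    rcases mul_eq_zero.mp h2 with h | h
    · exact absurd h (hc0 k)
    · exact h
  have hρac : ∀ k, ρ k ≪ lam :=
    fun k => (Measure.absolutelyContinuous_of_le (hρle k)).trans (hνac k)
  set u : ℕ → EReal → ℝ≥0∞ := fun k => (ν k).rnDeriv lam with hu
  set v : ℕ → EReal → ℝ≥0∞ := fun k => (ρ k).rnDeriv lam with hv
  have humeas : ∀ k, Measurable (u k) := fun k => Measure.measurable_rnDeriv _ _
  have hvmeas : ∀ k, Measurable (v k) := fun k => Measure.measurable_rnDeriv _ _
  haveI : ∀ k, IsFiniteMeasure (ν k) := fun k => by haveI := hνprob k; infer_instance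
  haveI : ∀ k, IsFiniteMeasure (ρ k) :=
    fun k => ⟨lt_of_le_of_lt (Measure.le_iff'.mp (hρle k) univ) (measure_lt_top _ _)⟩
  have huwd : ∀ k, lam.withDensity (u k) = ν k :=
    fun k => Measure.withDensity_rnDeriv_eq _ _ (hνac k)
  have hvwd : ∀ k, lam.withDensity (v k) = ρ k :=
    fun k => Measure.withDensity_rnDeriv_eq _ _ (hρac k)
  -- sum identities
  have htsum_apply : ∀ (f : ℕ → EReal → ℝ≥0∞),
      (∑' k, f k) = fun t => ∑' k, f k t := by
    intro f
    funext t
    exact tsum_apply (Pi.summable.mpr fun _ => ENNReal.summable)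
  have hwd_sum : ∀ (f : ℕ → EReal → ℝ≥0∞), (∀ k, Measurable (f k)) →
      lam.withDensity (fun t => ∑' k, c k * f k t)
        = Measure.sum fun k => c k • lam.withDensity (f k) := by
    intro f hf
    rw [← htsum_apply fun k t => c k * f k t]
    rw [show (∑' k, fun t => c k * f k t) = ∑' k, (c k • f k) from rfl]
    rw [withDensity_tsum (fun k => (hf k).const_smul (c k))]
    congr 1
    funext k
    exact withDensity_smul (c k) (hf k)
  have hsum_u : ∀ᵐ t ∂lam, (∑' k, c k * u k t) = 1 := by
    have h1 : lam.withDensity (fun t => ∑' k, c k * u k t) = lam := by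
      rw [hwd_sum u humeas]
      simp_rw [huwd]
      rfl
    have h2 := Measure.rnDeriv_withDensity lam
      (Measurable.ennreal_tsum fun k => (humeas k).const_mul (c k))
    rw [h1] at h2
    filter_upwards [h2.symm, Measure.rnDeriv_self lam] with t h3 h4
    exact h3.trans h4
  have hsum_v : ∀ᵐ t ∂lam, W t = (∑' k, c k * v k t) := by
    have h1 : lam.withDensity (fun t => ∑' k, c k * v k t) = rh := by
      rw [hwd_sum v hvmeas]
      simp_rw [hvwd]
      rfl
    have h2 := Measure.rnDeriv_withDensity lam
      (Measurable.ennreal_tsum fun k => (hvmeas k).const_mul (c k))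
    rw [h1] at h2
    exact h2
  -- proportionality between densities
  set C2 : ℕ → ℕ → ℝ≥0∞ := fun j k => (μ (K k) * (μ (K j))⁻¹) ^ n with hC2
  have hprop : ∀ j k, j ≤ k →
      (∀ᵐ t ∂lam, u j t = C2 j k * (T j).indicator (u k) t) ∧
      (∀ᵐ t ∂lam, v j t = C2 j k * (T j).indicator (v k) t) := by
    intro j k hjk
    have hνeq : ν j = C2 j k • (ν k).restrict (T j) :=
      nu_eq hn (hKmem j) (hKmem k) (hKmono hjk)
    have hρeq : ρ j = C2 j k • (ρ k).restrict (T j) :=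
      rho_eq hn hA (hKmem j) (hKmem k) (hKmono hjk)
    constructor
    · have h1 : ν j = lam.withDensity (C2 j k • (T j).indicator (u k)) := by
        rw [withDensity_smul _ ((humeas k).indicator (hTmeas j)),
          withDensity_indicator (hTmeas j), ← restrict_withDensity (hTmeas j), huwd, ← hνeq]
      have h2 := Measure.rnDeriv_withDensity lam
        (((humeas k).indicator (hTmeas j)).const_smul (C2 j k))
      rw [← h1] at h2
      exact h2
    · have h1 : ρ j = lam.withDensity (C2 j k • (T j).indicator (v k)) := by
        rw [withDensity_smul _ ((hvmeas k).indicator (hTmeas j)),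
          withDensity_indicator (hTmeas j), ← restrict_withDensity (hTmeas j), hvwd, ← hρeq]
      have h2 := Measure.rnDeriv_withDensity lam
        (((hvmeas k).indicator (hTmeas j)).const_smul (C2 j k))
      rw [← h1] at h2
      exact h2
  have hsymm : ∀ j k, ∀ᵐ t ∂lam, u j t * v k t = v j t * u k t := by
    have hcase : ∀ j k, j ≤ k → ∀ᵐ t ∂lam, u j t * v k t = v j t * u k t := by
      intro j k hjk
      obtain ⟨h1, h2⟩ := hprop j k hjk
      filter_upwards [h1, h2] with t h1t h2t
      rw [h1t, h2t]
      by_cases ht : t ∈ T j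
      · rw [Set.indicator_of_mem ht, Set.indicator_of_mem ht]
        ring
      · rw [Set.indicator_of_notMem ht, Set.indicator_of_notMem ht]
        simp
    intro j k
    rcases le_total j k with hjk | hkj
    · exact hcase j k hjk
    · filter_upwards [hcase k j hkj] with t ht
      rw [mul_comm (u j t), mul_comm (v j t)]
      exact ht.symm
  have hkey : ∀ k, ∀ᵐ t ∂lam, W t * u k t = v k t := by
    intro k
    filter_upwards [hsum_u, hsum_v, ae_all_iff.mpr fun j => hsymm j k] with t h1 h2 h3
    calc W t * u k t = (∑' j, c j * v j t) * u k t := by rw [h2]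
      _ = ∑' j, c j * v j t * u k t := by rw [ENNReal.tsum_mul_right]
      _ = ∑' j, c j * u j t * v k t := by
          congr 1
          funext j
          rw [mul_assoc, mul_assoc, ← h3 j]
      _ = (∑' j, c j * u j t) * v k t := by rw [← ENNReal.tsum_mul_right]
      _ = v k t := by rw [h1, one_mul]
  have hcore : ∀ k, (ν k).withDensity W = ρ k := by
    intro k
    calc (ν k).withDensity W = (lam.withDensity (u k)).withDensity W := by rw [huwd]
      _ = lam.withDensity (u k * W) := (withDensity_mul lam (humeas k) hWmeas).symm
      _ = lam.withDensity (v k) := by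
          refine withDensity_congr_ae ?_
          filter_upwards [hkey k] with t ht
          rw [Pi.mul_apply, mul_comm]
          exact ht
      _ = ρ k := hvwd k
  have hTmono : Monotone T := fun j k hjk t ht s hs => hKmono hjk (ht s hs)
  refine ⟨fun x => (W (mmin n S x)).toReal, ?_, ?_⟩
  · exact (hWmeas.ennreal_toReal).comp (comap_measurable (mmin n S))
  · rintro P ⟨J, hupJ, hJ0, hJt, rfl⟩ s' hs'
    obtain ⟨B, hB, rfl⟩ := hs'
    have hJU : J ∈ UU μ := ⟨hupJ, hJ0, hJt⟩
    haveI : IsProbabilityMeasure (condLaw μ J) := condLaw_prob μ hJ0.ne' hJt.ne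
    set νJ : Measure EReal :=
      Measure.map (mmin n S) (Measure.pi fun _ : Fin n => condLaw μ J) with hνJ
    set ρJ : Measure EReal :=
      Measure.map (mmin n S) ((Measure.pi fun _ : Fin n => condLaw μ J).restrict A) with hρJ
    have hρJle : ρJ ≤ νJ := Measure.map_mono Measure.restrict_le_self hm
    have hmain : νJ.withDensity W = ρJ ∧
        ∀ N : Set EReal, MeasurableSet N → lam N = 0 → νJ N = 0 := by
      by_cases hsub : ∃ k, J ⊆ K k
      · obtain ⟨k, hk⟩ := hsub
        have h1 : νJ = (μ (K k) * (μ J)⁻¹) ^ n • (ν k).restrict (hat J) :=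
          nu_eq hn hJU (hKmem k) hk
        have h2 : ρJ = (μ (K k) * (μ J)⁻¹) ^ n • (ρ k).restrict (hat J) :=
          rho_eq hn hA hJU (hKmem k) hk
        constructor
        · rw [h1, withDensity_smul_measure, ← restrict_withDensity (measurableSet_hat J),
            hcore k]
          exact h2.symm
        · intro N hN hlamN
          rw [h1, Measure.smul_apply, Measure.restrict_apply hN, smul_eq_mul,
            (hνac k) (measure_mono_null inter_subset_left hlamN), mul_zero]
      · push_neg at hsub
        have hKJ : ∀ k, K k ⊆ J := by
          intro k
          rcases upray_chain hJU.1 (hKmem k).1 with h' | h'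
          · exact absurd h' (hsub k)
          · exact h'
        have hCk0 : ∀ k, (μ J * (μ (K k))⁻¹) ^ n ≠ 0 ∧ (μ J * (μ (K k))⁻¹) ^ n ≠ ⊤ :=
          fun k => cpow_ne_zero hJU (hKmem k) (hKJ k)
        have hres : ∀ k, νJ.restrict (T k) = ((μ J * (μ (K k))⁻¹) ^ n)⁻¹ • ν k :=
          fun k => smul_cancel_measure (hCk0 k).1 (hCk0 k).2 (nu_eq hn (hKmem k) hJU (hKJ k))
        have hresρ : ∀ k, ρJ.restrict (T k) = ((μ J * (μ (K k))⁻¹) ^ n)⁻¹ • ρ k :=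
          fun k => smul_cancel_measure (hCk0 k).1 (hCk0 k).2 (rho_eq hn hA (hKmem k) hJU (hKJ k))
        set D : Set EReal := ⋃ k, T k with hD
        have hDmeas : MeasurableSet D := MeasurableSet.iUnion hTmeas
        have hνDc : νJ Dᶜ = 0 := by
          rw [hνJ, Measure.map_apply hm hDmeas.compl, preimage_compl]
          have hpre : mmin n S ⁻¹' D = ⋃ k, Set.pi univ fun _ : Fin n => K k := by
            rw [hD, preimage_iUnion]
            exact iUnion_congr hTpre
          rw [hpre]
          set U : Set S := ⋃ k, K k with hU
          have hUmeas : MeasurableSet U := MeasurableSet.iUnion hKmeas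
          have hsubG : (Set.pi univ fun _ : Fin n => (J ∩ U : Set S))
              ⊆ ⋃ k, Set.pi univ fun _ : Fin n => K k := by
            intro x hx
            have hx' : ∀ i : Fin n, ∃ k, x i ∈ K k := fun i => mem_iUnion.mp (hx i trivial).2
            choose κ hκ using hx'
            exact mem_iUnion.mpr ⟨Finset.univ.sup κ, fun i _ =>
              hKmono (Finset.le_sup (Finset.mem_univ i)) (hκ i)⟩
          refine measure_mono_null (compl_subset_compl.mpr hsubG) ?_
          refine pi_condLaw_compl_box_null μ ?_
            ((measurableSet_upray hJU.1).inter hUmeas) hJ0.ne' hJt.ne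
          rw [diff_self_inter]
          exact hKnull J hJU
        have hρDc : ρJ Dᶜ = 0 :=
          le_antisymm ((Measure.le_iff'.mp hρJle _).trans hνDc.le) zero_le
        have hresW : ∀ k, (νJ.withDensity W).restrict (T k) = ρJ.restrict (T k) := by
          intro k
          rw [restrict_withDensity (hTmeas k), hres k, withDensity_smul_measure, hcore k,
            hresρ k]
        constructor
        · refine Measure.ext fun B' hB' => ?_
          have h1 : (νJ.withDensity W) (B' \ D) = 0 := by
            refine measure_mono_null (diff_subset_compl B' D) ?_
            rw [withDensity_apply _ hDmeas.compl, Measure.restrict_eq_zero.mpr hνDc,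
              lintegral_zero_measure]
          have h2 : ρJ (B' \ D) = 0 := measure_mono_null (diff_subset_compl B' D) hρDc
          have h3 : (νJ.withDensity W) (B' ∩ D) = ρJ (B' ∩ D) := by
            have hBD : ∀ (σ : Measure EReal), σ (B' ∩ D) = ⨆ k, σ (B' ∩ T k) := by
              intro σ
              rw [hD, inter_iUnion]
              exact Directed.measure_iUnion
                ((monotone_const.inter hTmono).directed_le)
            rw [hBD, hBD]
            refine iSup_congr fun k => ?_
            calc (νJ.withDensity W) (B' ∩ T k)
                = ((νJ.withDensity W).restrict (T k)) B' := (Measure.restrict_apply hB').symm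
              _ = (ρJ.restrict (T k)) B' := by rw [hresW k]
              _ = ρJ (B' ∩ T k) := Measure.restrict_apply hB'
          rw [← measure_inter_add_diff B' hDmeas, ← measure_inter_add_diff (μ := ρJ) B' hDmeas,
            h1, h2, h3]
        · intro N hN hlamN
          have hT0 : ∀ k, νJ (N ∩ T k) = 0 := by
            intro k
            have h4 : (νJ.restrict (T k)) N = 0 := by
              rw [hres k, Measure.smul_apply, smul_eq_mul, (hνac k) hlamN, mul_zero]
            rwa [Measure.restrict_apply hN] at h4
          rw [← measure_inter_add_diff N hDmeas]
          have hz1 : νJ (N ∩ D) = 0 := by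
            rw [hD, inter_iUnion]
            exact measure_iUnion_null fun k => hT0 k
          have hz2 : νJ (N \ D) = 0 := measure_mono_null (diff_subset_compl N D) hνDc
          rw [hz1, hz2, add_zero]
    have hmB : MeasurableSet (mmin n S ⁻¹' B) := hm hB
    have e1 : ∫ x in mmin n S ⁻¹' B, (W (mmin n S x)).toReal
        ∂(Measure.pi fun _ : Fin n => condLaw μ J)
        = ∫ t in B, (W t).toReal ∂νJ := by
      rw [hνJ]
      exact (setIntegral_map hB (hWmeas.ennreal_toReal).aestronglyMeasurable
        hm.aemeasurable).symm
    rw [e1]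
    have hWlt : ∀ᵐ t ∂(νJ.restrict B), W t < ⊤ := by
      have hNmeas : MeasurableSet {t : EReal | W t = ⊤} := hWmeas (measurableSet_singleton ⊤)
      have hlamN : lam {t : EReal | W t = ⊤} = 0 := by
        have h := Measure.rnDeriv_lt_top rh lam
        rw [ae_iff] at h
        convert h using 2
        ext t
        simp [lt_top_iff_ne_top]
        rfl
      have hνN := hmain.2 _ hNmeas hlamN
      refine ae_restrict_of_ae ?_
      rw [ae_iff]
      convert hνN using 2
      ext t
      simp [lt_top_iff_ne_top]
    rw [integral_toReal hWmeas.aemeasurable hWlt]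
    congr 1
    have e2 : ∫⁻ t in B, W t ∂νJ = (νJ.withDensity W) B := (withDensity_apply _ hB).symm
    rw [e2, hmain.1, hρJ, Measure.map_apply hm hB, Measure.restrict_apply hmB]

end Suff

end MinCS

/-- **Corollary (a).** On a measurable subspace `S` of the extended real line, the
statistic `min_{i=1}^n Xᵢ` (the infimum of the coordinates) is complete and sufficient
for the model `{μ(·|J)^{⊗n} : J upray in S, 0 < μ(J) < ∞}`. -/
theorem min_complete_sufficient_for_uprays
    (S : Set EReal) (μ : Measure S) (n : ℕ) (hn : 0 < n) :
    IsLSComplete MeasurableSpace.pi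
        (MeasurableSpace.comap (fun x : Fin n → S => ⨅ i, (x i : EReal)) inferInstance)
        {P : Measure (Fin n → S) | ∃ J : Set S,
          (∀ x ∈ J, ∀ y : S, x ≤ y → y ∈ J) ∧ 0 < μ J ∧ μ J < ⊤ ∧
          P = Measure.pi fun _ : Fin n => condLaw μ J} ∧
      IsLSSufficient MeasurableSpace.pi
        (MeasurableSpace.comap (fun x : Fin n → S => ⨅ i, (x i : EReal)) inferInstance)
        {P : Measure (Fin n → S) | ∃ J : Set S,
          (∀ x ∈ J, ∀ y : S, x ≤ y → y ∈ J) ∧ 0 < μ J ∧ μ J < ⊤ ∧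
          P = Measure.pi fun _ : Fin n => condLaw μ J} := by
  exact ⟨MinCS.complete_part hn, MinCS.suff_part hn⟩
end
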